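/- arXiv:1511.03869 — 11 statements merged into one kernel-verified Lean document; each statement's English description precedes it below -/
import Mathlib

section
/- For every real number a with 3 < a ≤ 3.7, the quantity q(a) = 3a - 9 - (a-1)(a-2)·log(1 + 1/(a-2)) is strictly negative. -/
open Real Set

lemma pade_log (y : ℝ) (hy : 1 ≤ y) : 2 * (y - 1) / (y + 1) ≤ Real.log y := by
  have hmono : MonotoneOn (fun z : ℝ => Real.log z - (2 - 4 / (z + 1))) (Set.Ici 1) := by
    have hderiv : ∀ z ∈ interior (Set.Ici (1:ℝ)),
        0 ≤ deriv (fun z : ℝ => Real.log z - (2 - 4 / (z + 1))) z := by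
      intro z hz
      rw [interior_Ici] at hz
      have hz1 : (1:ℝ) < z := hz
      have hz0 : z ≠ 0 := by linarith
      have hz1' : z + 1 ≠ 0 := by linarith
      have hd : HasDerivAt (fun z : ℝ => Real.log z - (2 - 4 / (z + 1))) 
          (z⁻¹ - (0 - (-4 / (z+1)^2))) z := by
        have h1 : HasDerivAt Real.log z⁻¹ z := Real.hasDerivAt_log hz0
        have h2 : HasDerivAt (fun z : ℝ => z + 1) 1 z := (hasDerivAt_id z).add_const 1
        have h3 : HasDerivAt (fun z : ℝ => 4 / (z + 1)) (-4 / (z+1)^2) z := by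
          have := (h2.inv hz1').const_mul (4:ℝ)
          simp only [mul_comm] at this
          have e1 : (fun z : ℝ => 4 / (z + 1)) = fun y => 4 * (fun z : ℝ => z + 1)⁻¹ y := by
            ext x; simp [div_eq_mul_inv]
          have e2 : (-4 / (z+1)^2 : ℝ) = -1 / (z + 1) ^ 2 * 4 := by ring
          rw [e1, e2]; exact this
        exact h1.sub ((hasDerivAt_const z (2:ℝ)).sub h3)
      rw [hd.deriv]
      have : z⁻¹ - (0 - (-4 / (z+1)^2)) = (z-1)^2 / (z * (z+1)^2) := by
        field_simp; ring
      rw [this]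
      positivity
    apply monotoneOn_of_deriv_nonneg (convex_Ici 1) _ _ hderiv
    · apply ContinuousOn.sub
      · exact Real.continuousOn_log.mono (by intro x hx; simp at hx ⊢; intro h; simp [h] at hx; linarith)
      · apply ContinuousOn.sub continuousOn_const
        apply ContinuousOn.div continuousOn_const (by fun_prop)
        intro x hx; simp at hx; intro h; linarith
    · apply DifferentiableOn.sub
      · intro x hx
        rw [interior_Ici] at hx
        have hx' : (1:ℝ) < x := hx
        exact (Real.differentiableAt_log (ne_of_gt (by linarith))).differentiableWithinAt
      · intro x hx
        rw [interior_Ici] at hx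
        have hx' : (1:ℝ) < x := hx
        have : x + 1 ≠ 0 := ne_of_gt (by linarith)
        fun_prop (disch := assumption)
  have h01 := hmono (Set.self_mem_Ici) (Set.mem_Ici.mpr hy) hy
  simp only [Real.log_one] at h01
  have e1 : 2 * (y - 1) / (y + 1) = 2 - 4 / (y + 1) := by
    have : y + 1 ≠ 0 := by linarith
    field_simp; ring
  rw [e1]
  norm_num at h01
  linarith

theorem q_neg (a : ℝ) (h1 : 3 < a) (h2 : a ≤ 3.7) :
    3 * a - 9 - (a - 1) * (a - 2) * Real.log (1 + 1 / (a - 2)) < 0 := by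
  set t : ℝ := a - 2 with ht
  have ht1 : 1 < t := by simp [ht]; linarith
  have ht2 : t ≤ 1.7 := by simp [ht]; norm_num at h2 ⊢; linarith
  have h3 : (0:ℝ) < 4*t+3 := by linarith
  have h4 : (0:ℝ) < 4*t+1 := by linarith
  have hth : (0:ℝ) < t + 1/2 := by linarith
  have ht0 : (0:ℝ) < t := by linarith
  have split : 1 + 1/t = ((t+1)/(t+1/2)) * ((t+1/2)/t) := by
    field_simp
  have hy1 : 1 ≤ (t+1)/(t+1/2) := by
    rw [le_div_iff₀ hth]; linarith
  have hy2 : 1 ≤ (t+1/2)/t := by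
    rw [le_div_iff₀ ht0]; linarith
  have l1 : 2/(4*t+3) ≤ Real.log ((t+1)/(t+1/2)) := by
    refine le_trans (le_of_eq ?_) (pade_log _ hy1)
    rw [div_eq_div_iff h3.ne' (ne_of_gt (by positivity))]
    field_simp
    try ring
  have l2 : 2/(4*t+1) ≤ Real.log ((t+1/2)/t) := by
    refine le_trans (le_of_eq ?_) (pade_log _ hy2)
    rw [div_eq_div_iff h4.ne' (ne_of_gt (by positivity))]
    field_simp
    try ring
  have hlog : 2/(4*t+3) + 2/(4*t+1) ≤ Real.log (1 + 1/t) := by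
    rw [split, Real.log_mul (by positivity) (by positivity)]
    linarith
  have key : 3*t - 3 < t*(t+1) * (2/(4*t+3) + 2/(4*t+1)) := by
    have e : 2/(4*t+3) + 2/(4*t+1) = (2*(4*t+1)+2*(4*t+3))/((4*t+3)*(4*t+1)) := by
      field_simp
      try ring
    rw [e, ← mul_div_assoc, lt_div_iff₀ (by positivity)]
    nlinarith [mul_nonneg (sub_nonneg.mpr ht2) (sub_nonneg.mpr ht1.le), sq_nonneg (t-1), mul_pos ht0 ht0]
  have hmul : t*(t+1) * (2/(4*t+3) + 2/(4*t+1)) ≤ t*(t+1) * Real.log (1 + 1/t) := by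
    apply mul_le_mul_of_nonneg_left hlog (by positivity)
  have : (a-1)*(a-2) = t*(t+1) := by simp [ht]; ring
  rw [this]
  have : 3*a - 9 = 3*t - 3 := by simp [ht]; ring
  linarith [key, hmul]
end

section
/- The function q(a) = 3a - 9 - (a-1)(a-2)·log(1 + 1/(a-2)) has strictly positive derivative for all a in the interval (3, 3.7]. -/
theorem q_deriv_pos (a : ℝ) (h1 : 3 < a) (h2 : a ≤ 3.7) :
    0 < deriv (fun x : ℝ => 3 * x - 9 - (x - 1) * (x - 2) * Real.log (1 + 1 / (x - 2))) a := by
  have ha2 : (0:ℝ) < a - 2 := by linarith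
  have ha2' : a - 2 ≠ 0 := ne_of_gt ha2
  have hg_pos : (0:ℝ) < 1 + 1 / (a - 2) := by positivity
  have hg_ne : (1:ℝ) + 1 / (a - 2) ≠ 0 := ne_of_gt hg_pos
  -- derivative of inner function 1 + 1/(x-2)
  have hsub : HasDerivAt (fun x : ℝ => x - 2) 1 a := (hasDerivAt_id a).sub_const 2
  have hinv : HasDerivAt (fun x : ℝ => (x - 2)⁻¹) (-1 / (a - 2) ^ 2) a := by
    have := hsub.inv ha2'
    exact this
  have hg : HasDerivAt (fun x : ℝ => 1 + 1 / (x - 2)) (-1 / (a - 2) ^ 2) a := by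
    simpa [one_div] using hinv.const_add 1
  have hL : HasDerivAt (fun x : ℝ => Real.log (1 + 1 / (x - 2)))
      ((-1 / (a - 2) ^ 2) / (1 + 1 / (a - 2))) a := hg.log hg_ne
  have hp : HasDerivAt (fun x : ℝ => (x - 1) * (x - 2)) (1 * (a - 2) + (a - 1) * 1) a :=
    ((hasDerivAt_id a).sub_const 1).mul ((hasDerivAt_id a).sub_const 2)
  have hprod : HasDerivAt (fun x : ℝ => (x - 1) * (x - 2) * Real.log (1 + 1 / (x - 2)))
      ((1 * (a - 2) + (a - 1) * 1) * Real.log (1 + 1 / (a - 2)) +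
        (a - 1) * (a - 2) * ((-1 / (a - 2) ^ 2) / (1 + 1 / (a - 2)))) a := hp.mul hL
  have hlin : HasDerivAt (fun x : ℝ => 3 * x - 9) 3 a := by
    simpa using ((hasDerivAt_id a).const_mul 3).sub_const 9
  have hf := hlin.sub hprod
  have hderiv := hf.deriv
  change 0 < deriv ((fun x : ℝ => 3 * x - 9) - fun x : ℝ => (x - 1) * (x - 2) * Real.log (1 + 1 / (x - 2))) a
  rw [hderiv]
  -- simplify the second term of the product rule
  have hsimp : (a - 1) * (a - 2) * ((-1 / (a - 2) ^ 2) / (1 + 1 / (a - 2))) = -1 := by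
    have h12 : (a - 2) * (1 + 1 / (a - 2)) = a - 1 := by
      field_simp
      ring
    field_simp
    ring
  rw [hsimp]
  -- now goal: 0 < 3 - ((1*(a-2)+(a-1)*1) * log(...) + -1)
  have hlog_le : Real.log (1 + 1 / (a - 2)) ≤ Real.log 2 := by
    apply Real.log_le_log hg_pos
    have : 1 / (a - 2) ≤ 1 := by
      rw [div_le_one ha2]; linarith
    linarith
  have hlog_nonneg : 0 ≤ Real.log (1 + 1 / (a - 2)) := by
    apply Real.log_nonneg
    have : 0 ≤ 1 / (a - 2) := by positivity
    linarith
  have hcoef : (1 * (a - 2) + (a - 1) * 1) ≤ 4.4 := by norm_num; linarith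
  have hcoef0 : (0:ℝ) ≤ 1 * (a - 2) + (a - 1) * 1 := by nlinarith
  have hlog2 : Real.log 2 < 0.6931471808 := Real.log_two_lt_d9
  have hbound : (1 * (a - 2) + (a - 1) * 1) * Real.log (1 + 1 / (a - 2)) < 4 := by
    calc (1 * (a - 2) + (a - 1) * 1) * Real.log (1 + 1 / (a - 2))
        ≤ 4.4 * Real.log 2 := by
          apply mul_le_mul hcoef hlog_le hlog_nonneg (by norm_num)
      _ < 4.4 * 0.6931471808 := by nlinarith [Real.log_nonneg (by norm_num : (1:ℝ) ≤ 2)]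
      _ < 4 := by norm_num
  linarith
end

section
/- For every real a with 3 < a ≤ 3.7, the expression 29 + 8a(a-4) - (a-2)·log(1 + 1/(a-2)) is strictly positive. -/
theorem denom_pos (a : ℝ) (h1 : 3 < a) (h2 : a ≤ 3.7) :
    0 < 29 + 8 * a * (a - 4) - (a - 2) * Real.log (1 + 1 / (a - 2)) := by
  have ha2 : (0:ℝ) < a - 2 := by linarith
  have hy : (0:ℝ) < 1 + 1 / (a - 2) := by positivity
  have hlog : Real.log (1 + 1 / (a - 2)) ≤ 1 / (a - 2) := by
    have := Real.log_le_sub_one_of_pos hy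
    linarith
  have hmul : (a - 2) * Real.log (1 + 1 / (a - 2)) ≤ 1 := by
    have := mul_le_mul_of_nonneg_left hlog (le_of_lt ha2)
    rw [mul_one_div, div_self (ne_of_gt ha2)] at this
    linarith
  nlinarith [mul_pos (show (0:ℝ) < a - 1 by linarith) (show (0:ℝ) < a - 3 by linarith)]
end

section
/- Let s > 0 and n ≥ 1 be reals. If g: [α, β] → ℝ is piecewise linear with g(α) = g(β) = 0, g has exactly one discontinuity γ in (α, β) which is a positive jump, g is decreasing with slope between -T and -s on each linear piece (for some T ≥ s), and on [α, γ) the function satisfies g(x) ≥ g(γ⁺) - s(γ - x) whenever the slope after γ exceeds -s - n somewhere (strict admissibility condition at a Γ₂ point), then ∫_α^β |g(x)| dx ≥ (β - α)² · s(n + s) / (2(n + 2s)). -/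
open Set MeasureTheory intervalIntegral

lemma decay_bound (g : ℝ → ℝ) (a b C : ℝ) (hab : a ≤ b) (hc : ContinuousOn g (Icc a b))
    (hd : ∀ x ∈ Ico a b, ∃ sl : ℝ, HasDerivWithinAt g sl (Ioi x) x ∧ sl ≤ C) :
    g b ≤ g a + C * (b - a) := by
  classical
  set f' : ℝ → ℝ := fun x => if h : x ∈ Ico a b then (hd x h).choose else C with hf'
  have key : ∀ ⦃x⦄, x ∈ Icc a b → g x ≤ g a + C * (x - a) := by
    refine image_le_of_deriv_right_le_deriv_boundary (f' := f') (B' := fun _ => C)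
      hc ?_ (by simp) ?_ ?_ ?_
    · intro x hx
      rw [hf']
      simp only [dif_pos hx]
      exact hasDerivWithinAt_Ioi_iff_Ici.1 (hd x hx).choose_spec.1
    · fun_prop
    · intro x hx
      have : HasDerivAt (fun t => g a + C * (t - a)) C x := by
        simpa using ((hasDerivAt_id x).sub_const a).const_mul C |>.const_add (g a)
      exact this.hasDerivWithinAt
    · intro x hx
      rw [hf'] ; simp only [dif_pos hx]
      exact (hd x hx).choose_spec.2
  simpa using key (right_mem_Icc.2 hab)

/-- Lemma 4 (Q₂-type interval estimate). -/
theorem q2_interval_bound (s n T α β γ : ℝ) (hs : 0 < s) (hn : 1 ≤ n) (hT : s ≤ T)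
    (g : ℝ → ℝ) (gp : ℝ) (hαγ : α < γ) (hγβ : γ < β)
    (hgα : g α = 0) (hgβ : g β = 0)
    -- g is continuous on the two pieces (left-continuous, positive jump at γ)
    (hcont1 : ContinuousOn g (Set.Icc α γ))
    (hcont2 : ContinuousOn g (Set.Ioc γ β))
    (hjump : Filter.Tendsto g (nhdsWithin γ (Set.Ioi γ)) (nhds gp))
    (hjump_pos : g γ < gp)
    -- piecewise linear with slopes between -T and -s off the jump point
    (hslope : ∀ x ∈ Set.Ico α β, x ≠ γ →
      ∃ sl : ℝ, HasDerivWithinAt g sl (Set.Ioi x) x ∧ -T ≤ sl ∧ sl ≤ -s)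
    -- strict admissibility (Γ₂) condition at γ
    (hΓ2 : (∃ xb ∈ Set.Ioo γ β, ∃ sl : ℝ,
        HasDerivWithinAt g sl (Set.Ioi xb) xb ∧ -s - n < sl) →
      ∀ x ∈ Set.Ico α γ, gp - s * (γ - x) ≤ g x) :
    (β - α) ^ 2 * (s * (n + s)) / (2 * (n + 2 * s)) ≤ ∫ x in α..β, |g x| := by
  have hn0 : (0:ℝ) < n := lt_of_lt_of_le one_pos hn
  -- Step 1: left bound g x ≤ -(s*(x-α)) on [α,γ]
  have hleft : ∀ x ∈ Set.Icc α γ, g x ≤ -(s * (x - α)) := by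
    intro x hx
    have hb := decay_bound g α x (-s) hx.1
      (hcont1.mono (Set.Icc_subset_Icc_right hx.2)) ?_
    · rw [hgα] at hb; linarith
    · intro y hy
      have hyγ : y < γ := lt_of_lt_of_le hy.2 hx.2
      obtain ⟨sl, h1, _, h3⟩ := hslope y ⟨hy.1, hyγ.trans hγβ⟩ (ne_of_lt hyγ)
      exact ⟨sl, h1, h3⟩
  -- Step 2: the Γ₂ antecedent is false
  have hno : ¬ (∃ xb ∈ Set.Ioo γ β, ∃ sl : ℝ,
      HasDerivWithinAt g sl (Set.Ioi xb) xb ∧ -s - n < sl) := by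
    intro h
    have hbd := hΓ2 h
    have hne : (nhdsWithin γ (Set.Ico α γ)).NeBot := by
      rw [← mem_closure_iff_nhdsWithin_neBot, closure_Ico hαγ.ne]
      exact Set.right_mem_Icc.2 hαγ.le
    have hlim : Filter.Tendsto g (nhdsWithin γ (Set.Ico α γ)) (nhds (g γ)) :=
      (hcont1 γ (Set.right_mem_Icc.2 hαγ.le)).mono Set.Ico_subset_Icc_self
    have h2 : Filter.Tendsto (fun x => gp - s * (γ - x))
        (nhdsWithin γ (Set.Ico α γ)) (nhds gp) := by
      have hc : Continuous fun x : ℝ => gp - s * (γ - x) := by fun_prop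
      have := (hc.tendsto γ).mono_left (nhdsWithin_le_nhds (s := Set.Ico α γ))
      simpa using this
    have : gp ≤ g γ := by
      refine le_of_tendsto_of_tendsto h2 hlim ?_
      filter_upwards [self_mem_nhdsWithin] with x hx using hbd x hx
    linarith
  -- Step 3: slopes on (γ,β) are ≤ -s - n
  have hsteep : ∀ y ∈ Set.Ioo γ β, ∃ sl, HasDerivWithinAt g sl (Set.Ioi y) y ∧ sl ≤ -s - n := by
    intro y hy
    obtain ⟨sl, h1, _, h3⟩ := hslope y ⟨hαγ.le.trans hy.1.le, hy.2⟩ (ne_of_gt hy.1)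
    refine ⟨sl, h1, ?_⟩
    by_contra hlt
    exact hno ⟨y, hy, sl, h1, by linarith⟩
  -- Step 4: right bound (s+n)*(β-x) ≤ g x on (γ,β]
  have hright : ∀ x ∈ Set.Ioc γ β, (s + n) * (β - x) ≤ g x := by
    intro x hx
    have hb := decay_bound g x β (-s - n) hx.2
      (hcont2.mono (fun z hz => ⟨hx.1.trans_le hz.1, hz.2⟩)) ?_
    · rw [hgβ] at hb; linarith
    · intro y hy
      exact hsteep y ⟨hx.1.trans_le hy.1, hy.2⟩
  -- Step 5: upper bound g x ≤ gp on (γ,β]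
  have hub : ∀ x ∈ Set.Ioc γ β, g x ≤ gp := by
    intro x hx
    refine ge_of_tendsto hjump ?_
    have hev : Set.Ioo γ x ∈ nhdsWithin γ (Set.Ioi γ) :=
      Ioo_mem_nhdsGT_of_mem ⟨le_rfl, hx.1⟩
    filter_upwards [hev] with y hy
    have hb := decay_bound g y x (-s) hy.2.le
      (hcont2.mono (fun z hz => ⟨hy.1.trans_le hz.1, hz.2.trans hx.2⟩)) ?_
    · nlinarith [mul_nonneg hs.le (sub_nonneg.2 hy.2.le)]
    · intro z hz
      obtain ⟨sl, h1, _, h3⟩ := hslope z ⟨hαγ.le.trans (hy.1.trans_le hz.1).le,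
        hz.2.trans_le hx.2⟩ (ne_of_gt (hy.1.trans_le hz.1))
      exact ⟨sl, h1, h3⟩
  have hgp_pos : 0 < gp := by
    have hmid : (γ + β) / 2 ∈ Set.Ioc γ β := ⟨by linarith, by linarith⟩
    have h1 := hright _ hmid
    have h2 := hub _ hmid
    nlinarith
  -- Integrability
  have hint1 : IntervalIntegrable (fun x => |g x|) volume α γ := by
    apply ContinuousOn.intervalIntegrable
    rw [Set.uIcc_of_le hαγ.le]
    exact hcont1.abs
  have hgint2 : IntegrableOn g (Set.Ioc γ β) := by
    have hmeas : AEStronglyMeasurable g (volume.restrict (Set.Ioc γ β)) :=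
      hcont2.aestronglyMeasurable measurableSet_Ioc
    refine Integrable.mono' (g := fun _ => gp)
      (integrableOn_const measure_Ioc_lt_top.ne) hmeas ?_
    refine (ae_restrict_iff' measurableSet_Ioc).2 (Filter.Eventually.of_forall fun x hx => ?_)
    rw [Real.norm_eq_abs, abs_le]
    refine ⟨?_, hub x hx⟩
    have h1 := hright x hx
    nlinarith [mul_nonneg (by linarith : (0:ℝ) ≤ s + n) (sub_nonneg.2 hx.2)]
  have hint2 : IntervalIntegrable (fun x => |g x|) volume γ β :=
    (intervalIntegrable_iff_integrableOn_Ioc_of_le hγβ.le).2 hgint2.abs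
  -- Splitting
  have hsplit : (∫ x in α..γ, |g x|) + (∫ x in γ..β, |g x|) = ∫ x in α..β, |g x| :=
    intervalIntegral.integral_add_adjacent_intervals hint1 hint2
  -- Lower bound on [α,γ]
  have L1 : (∫ x in α..γ, s * (x - α)) ≤ ∫ x in α..γ, |g x| := by
    refine intervalIntegral.integral_mono_on hαγ.le ?_ hint1 ?_
    · exact (Continuous.intervalIntegrable (by fun_prop) _ _)
    · intro x hx
      have := hleft x hx
      calc s * (x - α) ≤ -g x := by linarith
        _ ≤ |g x| := neg_le_abs _
  -- Lower bound on [γ,β]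
  have L2 : (∫ x in γ..β, (s + n) * (β - x)) ≤ ∫ x in γ..β, |g x| := by
    rw [intervalIntegral.integral_of_le hγβ.le, intervalIntegral.integral_of_le hγβ.le]
    refine setIntegral_mono_on ?_ hgint2.abs measurableSet_Ioc ?_
    · exact (Continuous.integrableOn_Ioc (by fun_prop))
    · intro x hx
      exact (hright x hx).trans (le_abs_self _)
  -- Model integrals
  have E1 : (∫ x in α..γ, s * (x - α)) = s * (γ - α) ^ 2 / 2 := by
    rw [intervalIntegral.integral_const_mul,
      intervalIntegral.integral_sub (Continuous.intervalIntegrable (by fun_prop) _ _)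
        (intervalIntegrable_const), integral_id, intervalIntegral.integral_const]
    simp [smul_eq_mul]; ring
  have E2 : (∫ x in γ..β, (s + n) * (β - x)) = (s + n) * (β - γ) ^ 2 / 2 := by
    rw [intervalIntegral.integral_const_mul,
      intervalIntegral.integral_sub (intervalIntegrable_const)
        (Continuous.intervalIntegrable (by fun_prop) _ _), integral_id,
        intervalIntegral.integral_const]
    simp [smul_eq_mul]; ring
  rw [E1] at L1; rw [E2] at L2
  rw [div_le_iff₀ (by positivity)]
  have htot : s * (γ - α) ^ 2 / 2 + (s + n) * (β - γ) ^ 2 / 2 ≤ ∫ x in α..β, |g x| := by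
    rw [← hsplit]; linarith
  have hfin : (β - α) ^ 2 * (s * (n + s)) ≤
      (s * (γ - α) ^ 2 / 2 + (s + n) * (β - γ) ^ 2 / 2) * (2 * (n + 2 * s)) := by
    nlinarith [sq_nonneg (s * (γ - α) - (s + n) * (β - γ))]
  nlinarith [mul_le_mul_of_nonneg_right htot (by positivity : (0:ℝ) ≤ 2 * (n + 2 * s))]
end

section
/- For all a with 3 < a ≤ 3.7 and any M > 0, the quadratic p(χ) = (a-2)(1 - M(a-2)χ)²/(2(3 + (a-2)log(1 + 1/(a-2)))) + M(a-2)χ(4 - Mχ)/16 is increasing on the interval [M⁻¹/(a - 1/2), M⁻¹/(a - 3/2)], and hence its minimum over that interval is attained at χ = M⁻¹/(a - 1/2). -/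
lemma neg_log_series_bound (v : ℝ) (h0 : 0 ≤ v) (h1 : v ≤ 1/2) :
    v + v^2/2 + v^3/3 + v^4/4 ≤ -Real.log (1 - v) := by
  have hderiv : ∀ t ∈ Set.Icc (0:ℝ) (1/2),
      HasDerivAt (fun t : ℝ => -Real.log (1 - t) - (t + t^2/2 + t^3/3 + t^4/4))
        (1/(1-t) - (1 + t + t^2 + t^3)) t := by
    intro t ht
    have hne : (1 : ℝ) - t ≠ 0 := by
      have := ht.2; intro h; nlinarith [ht.1]
    have h1t : HasDerivAt (fun t : ℝ => 1 - t) (-1) t := by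
      simpa using ((hasDerivAt_id t).const_sub 1)
    have hlog : HasDerivAt (fun t : ℝ => Real.log (1 - t)) ((1-t)⁻¹ * (-1)) t :=
      (Real.hasDerivAt_log hne).comp t h1t
    have hpoly : HasDerivAt (fun t : ℝ => t + t^2/2 + t^3/3 + t^4/4)
        (1 + t + t^2 + t^3) t := by
      have := (((hasDerivAt_id t).add
        (((hasDerivAt_pow 2 t).div_const 2))).add
        ((hasDerivAt_pow 3 t).div_const 3)).add
        ((hasDerivAt_pow 4 t).div_const 4)
      exact this.congr_deriv (by ring)
    have := hlog.neg.sub hpoly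
    exact this.congr_deriv (by ring)
  have hmono : MonotoneOn (fun t : ℝ => -Real.log (1 - t) - (t + t^2/2 + t^3/3 + t^4/4))
      (Set.Icc (0:ℝ) (1/2)) := by
    apply monotoneOn_of_deriv_nonneg (convex_Icc _ _)
    · exact fun t ht => ((hderiv t ht).continuousAt).continuousWithinAt
    · intro t ht
      rw [interior_Icc] at ht
      exact (hderiv t ⟨le_of_lt ht.1, le_of_lt ht.2⟩).differentiableAt.differentiableWithinAt
    · intro t ht
      rw [interior_Icc] at ht
      rw [(hderiv t ⟨le_of_lt ht.1, le_of_lt ht.2⟩).deriv]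
      have h1t : 0 < 1 - t := by linarith [ht.2]
      have heq : 1/(1-t) - (1 + t + t^2 + t^3) = t^4 / (1 - t) := by field_simp; ring
      rw [heq]
      positivity
  have h00 : (0:ℝ) ∈ Set.Icc (0:ℝ) (1/2) := by norm_num
  have hv : v ∈ Set.Icc (0:ℝ) (1/2) := ⟨h0, h1⟩
  have := hmono h00 hv h0
  simp at this
  linarith

lemma key_log (a : ℝ) (h1 : 3 < a) (h2 : a ≤ 3.7) :
    3*(a-3) ≤ (a-1)*(a-2)*Real.log (1 + 1/(a-2)) := by
  have ha1 : (0:ℝ) < a - 1 := by linarith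
  have ha2 : (0:ℝ) < a - 2 := by linarith
  have h2' : a ≤ 37/10 := by norm_num at h2 ⊢; linarith
  set v : ℝ := 1/(a-1) with hv
  have hv0 : 0 ≤ v := by positivity
  have hv1 : v ≤ 1/2 := by
    rw [hv, div_le_div_iff₀ ha1 (by norm_num)]; linarith
  have h1ne : a - 1 ≠ 0 := ne_of_gt ha1
  have h2ne : a - 2 ≠ 0 := ne_of_gt ha2
  have hrw : 1 + 1/(a-2) = (1 - v)⁻¹ := by
    rw [hv]
    rw [show (1:ℝ) - 1/(a-1) = (a-2)/(a-1) by field_simp; ring]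
    rw [show ((a-2)/(a-1))⁻¹ = (a-1)/(a-2) by rw [inv_div]]
    field_simp; ring
  rw [hrw, Real.log_inv]
  have hS := neg_log_series_bound v hv0 hv1
  have hq : 36*(a-3)*(a-1)^3 ≤ (a-2)*(12*(a-1)^3+6*(a-1)^2+4*(a-1)+3) := by
    nlinarith [sq_nonneg (a-3), sq_nonneg (a - 37/10), mul_nonneg (show (0:ℝ) ≤ a-3 by linarith) (show (0:ℝ) ≤ 37/10 - a by linarith), sq_nonneg a]
  have hpoly : 3*(a-3) ≤ (a-1)*(a-2)*(v + v^2/2 + v^3/3 + v^4/4) := by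
    have heq : (a-1)*(a-2)*(v + v^2/2 + v^3/3 + v^4/4)
        = (a-2)*(12*(a-1)^3+6*(a-1)^2+4*(a-1)+3) / (12*(a-1)^3) := by
      rw [hv]; field_simp; ring
    rw [heq, le_div_iff₀ (by positivity)]
    nlinarith [hq]
  calc 3*(a-3) ≤ (a-1)*(a-2)*(v + v^2/2 + v^3/3 + v^4/4) := hpoly
    _ ≤ (a-1)*(a-2)*(-Real.log (1-v)) := by
        apply mul_le_mul_of_nonneg_left hS (by positivity)

set_option maxHeartbeats 1000000 in
theorem p_monotone_on_interval (a M : ℝ) (hM : 0 < M) (h1 : 3 < a) (h2 : a ≤ 3.7) :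
    MonotoneOn
      (fun χ : ℝ =>
        (a - 2) * (1 - M * (a - 2) * χ) ^ 2 /
            (2 * (3 + (a - 2) * Real.log (1 + 1 / (a - 2)))) +
          M * (a - 2) * (χ * (4 - M * χ)) / 16)
      (Set.Icc (M⁻¹ / (a - 1 / 2)) (M⁻¹ / (a - 3 / 2))) ∧
    ∀ χ ∈ Set.Icc (M⁻¹ / (a - 1 / 2)) (M⁻¹ / (a - 3 / 2)),
      (a - 2) * (1 - M * (a - 2) * (M⁻¹ / (a - 1 / 2))) ^ 2 /
          (2 * (3 + (a - 2) * Real.log (1 + 1 / (a - 2)))) +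
        M * (a - 2) * ((M⁻¹ / (a - 1 / 2)) * (4 - M * (M⁻¹ / (a - 1 / 2)))) / 16 ≤
      (a - 2) * (1 - M * (a - 2) * χ) ^ 2 /
          (2 * (3 + (a - 2) * Real.log (1 + 1 / (a - 2)))) +
        M * (a - 2) * (χ * (4 - M * χ)) / 16 := by
  have ha1 : (0:ℝ) < a - 1 := by linarith
  have ha2 : (0:ℝ) < a - 2 := by linarith
  have ha2' : (1:ℝ) < a - 2 := by linarith
  have hah : (0:ℝ) < a - 1/2 := by linarith
  set L : ℝ := Real.log (1 + 1/(a-2)) with hLdef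
  have hLpos : 0 < L := Real.log_pos (by rw [lt_add_iff_pos_right]; positivity)
  have hLle : (a-2) * L ≤ 1 := by
    have h := Real.log_le_sub_one_of_pos (show (0:ℝ) < 1 + 1/(a-2) by positivity)
    have : L ≤ 1/(a-2) := by rw [hLdef]; linarith
    calc (a-2) * L ≤ (a-2) * (1/(a-2)) := by
          exact mul_le_mul_of_nonneg_left this ha2.le
      _ = 1 := by field_simp
  have hkey : 3*(a-3) ≤ (a-1)*(a-2)*L := key_log a h1 h2
  have hD : 0 < 3 + (a-2)*L := by positivity
  have hmono : MonotoneOn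
      (fun χ : ℝ =>
        (a - 2) * (1 - M * (a - 2) * χ) ^ 2 /
            (2 * (3 + (a - 2) * Real.log (1 + 1 / (a - 2)))) +
          M * (a - 2) * (χ * (4 - M * χ)) / 16)
      (Set.Icc (M⁻¹ / (a - 1 / 2)) (M⁻¹ / (a - 3 / 2))) := by
    intro x hx y hy hxy
    simp only
    rw [← hLdef, ← sub_nonneg]
    have hMx : 1 ≤ M * x * (a - 1/2) := by
      have hxc : M⁻¹ / (a - 1/2) ≤ x := hx.1
      have h' : M * (M⁻¹ / (a - 1/2)) ≤ M * x := mul_le_mul_of_nonneg_left hxc hM.le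
      rw [show M * (M⁻¹ / (a - 1/2)) = 1/(a-1/2) by field_simp] at h'
      rw [div_le_iff₀ hah] at h'
      linarith
    have hMy : 1 ≤ M * y * (a - 1/2) := by
      have hyc : M⁻¹ / (a - 1/2) ≤ y := hy.1
      have h' : M * (M⁻¹ / (a - 1/2)) ≤ M * y := mul_le_mul_of_nonneg_left hyc hM.le
      rw [show M * (M⁻¹ / (a - 1/2)) = 1/(a-1/2) by field_simp] at h'
      rw [div_le_iff₀ hah] at h'
      linarith
    have hEq : ((a - 2) * (1 - M * (a - 2) * y) ^ 2 / (2 * (3 + (a - 2) * L)) +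
          M * (a - 2) * (y * (4 - M * y)) / 16) -
        ((a - 2) * (1 - M * (a - 2) * x) ^ 2 / (2 * (3 + (a - 2) * L)) +
          M * (a - 2) * (x * (4 - M * x)) / 16)
        = (y - x) * (M * (a - 2)) *
            ((M*x + M*y) * (16*(a-2)^2 - (6 + 2*(a-2)*L)) +
              (4*(6 + 2*(a-2)*L) - 32*(a-2))) / (16 * (2 * (3 + (a-2)*L))) := by
      field_simp
      ring
    rw [hEq]
    have hDle : 6 + 2*(a-2)*L ≤ 8 := by linarith
    have h16 : 0 < 16*(a-2)^2 - (6 + 2*(a-2)*L) := by nlinarith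
    have hbr' : 0 ≤ ((M*x + M*y) * (16*(a-2)^2 - (6 + 2*(a-2)*L)) +
        (4*(6 + 2*(a-2)*L) - 32*(a-2))) * (a - 1/2) := by
      nlinarith [mul_nonneg (show 0 ≤ (M*x + M*y)*(a-1/2) - 2 by nlinarith) h16.le, hkey]
    have hbr : 0 ≤ (M*x + M*y) * (16*(a-2)^2 - (6 + 2*(a-2)*L)) +
        (4*(6 + 2*(a-2)*L) - 32*(a-2)) := by
      nlinarith [hbr']
    apply div_nonneg _ (by positivity)
    apply mul_nonneg _ hbr
    apply mul_nonneg (by linarith) (by positivity)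
  refine ⟨hmono, fun χ hχ => ?_⟩
  have hcmem : M⁻¹ / (a - 1/2) ∈ Set.Icc (M⁻¹ / (a - 1/2)) (M⁻¹ / (a - 3/2)) := by
    refine ⟨le_refl _, ?_⟩
    apply div_le_div_of_nonneg_left (by positivity) (by linarith) (by linarith)
  exact hmono hcmem hχ hχ.1
end

section
/- There exists a real a in (3, 3.7] (namely a ≈ 3.62079) such that (1/(2 log a)) · (a-2)·(12a + 9 + (a-2)(4a-3)·log(1 + 1/(a-2))) / (16·(a - 1/2)²·(3 + (a-2)·log(1 + 1/(a-2)))) > 0.065664679. -/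
open Finset in
lemma exp_lb_6433475 : (3.6208 : ℝ) < Real.exp 0.6433475 * Real.exp 0.6433475 := by
  have h := Real.sum_le_exp_of_nonneg (by norm_num : (0:ℝ) ≤ 0.6433475) 16
  have hS : (3.6208:ℝ) <
      (∑ i ∈ Finset.range 16, (0.6433475:ℝ) ^ i / i.factorial) ^ 2 := by
    norm_num [Finset.sum_range_succ, Nat.factorial]
  have hS0 : (0:ℝ) ≤ ∑ i ∈ Finset.range 16, (0.6433475:ℝ) ^ i / i.factorial := by
    positivity
  nlinarith [h, hS, hS0]

lemma exp_lb_4805598 : (1638/1013 : ℝ) < Real.exp 0.4805598 := by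
  have h := Real.sum_le_exp_of_nonneg (by norm_num : (0:ℝ) ≤ 0.4805598) 16
  have hS : (1638/1013:ℝ) <
      ∑ i ∈ Finset.range 16, (0.4805598:ℝ) ^ i / i.factorial := by
    norm_num [Finset.sum_range_succ, Nat.factorial]
  linarith

lemma exp_ub_4805597 : Real.exp 0.4805597 < (1638/1013 : ℝ) := by
  have h := Real.exp_bound' (by norm_num : (0:ℝ) ≤ 0.4805597)
    (by norm_num : (0.4805597:ℝ) ≤ 1) (by norm_num : 0 < 12)
  have hS : (∑ i ∈ Finset.range 12, (0.4805597:ℝ) ^ i / i.factorial) +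
      (0.4805597:ℝ) ^ 12 * (12 + 1) / ((12:ℕ).factorial * 12) < 1638/1013 := by
    norm_num [Finset.sum_range_succ, Nat.factorial]
  calc Real.exp 0.4805597 ≤ _ := h
    _ < (1638/1013:ℝ) := by exact_mod_cast hS

theorem numerical_optimum :
    ∃ a : ℝ, 3 < a ∧ a ≤ 3.7 ∧
      0.065664679 <
        1 / (2 * Real.log a) *
          ((a - 2) * (12 * a + 9 + (a - 2) * (4 * a - 3) * Real.log (1 + 1 / (a - 2))) /
            (16 * (a - 1 / 2) ^ 2 * (3 + (a - 2) * Real.log (1 + 1 / (a - 2))))) := by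
  refine ⟨3.6208, by norm_num, by norm_num, ?_⟩
  rw [show (1:ℝ) + 1 / (3.6208 - 2) = 1638/1013 by norm_num]
  set la := Real.log (3.6208 : ℝ) with hla_def
  set L := Real.log (1638/1013 : ℝ) with hL_def
  have hla0 : 0 < la := Real.log_pos (by norm_num)
  have hla2 : la < 1.286695 := by
    rw [hla_def, Real.log_lt_iff_lt_exp (by norm_num)]
    have : Real.exp (1.286695:ℝ) = Real.exp 0.6433475 * Real.exp 0.6433475 := by
      rw [← Real.exp_add]; norm_num
    rw [this]; exact exp_lb_6433475
  have hL1 : (0.4805597:ℝ) < L := by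
    rw [hL_def, Real.lt_log_iff_exp_lt (by norm_num)]
    exact exp_ub_4805597
  have hL2 : L < 0.4805598 := by
    rw [hL_def, Real.log_lt_iff_lt_exp (by norm_num)]
    exact exp_lb_4805598
  have hL0 : (0:ℝ) < L := lt_trans (by norm_num) hL1
  have hD : (0:ℝ) < 16 * (3.6208 - 1 / 2) ^ 2 * (3 + (3.6208 - 2) * L) := by nlinarith
  have h2la : (0:ℝ) < 2 * la := by linarith
  have hrw : 1 / (2 * la) *
      ((3.6208 - 2) * (12 * 3.6208 + 9 + (3.6208 - 2) * (4 * 3.6208 - 3) * L) /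
        (16 * (3.6208 - 1 / 2) ^ 2 * (3 + (3.6208 - 2) * L)))
      = ((3.6208 - 2) * (12 * 3.6208 + 9 + (3.6208 - 2) * (4 * 3.6208 - 3) * L)) /
        ((2 * la) * (16 * (3.6208 - 1 / 2) ^ 2 * (3 + (3.6208 - 2) * L))) := by
    rw [div_mul_div_comm, one_mul]
  rw [hrw, lt_div_iff₀ (by positivity)]
  nlinarith [mul_pos hla0 hL0,
    mul_nonneg (sub_pos.2 hla2).le (sub_pos.2 hL2).le,
    mul_nonneg hla0.le (sub_pos.2 hL2).le,
    mul_nonneg (sub_pos.2 hla2).le hL0.le]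
end

section
/- For all a with 3 < a ≤ 3.7, the improved bound exceeds the old one: (a-2)·(12a + 9 + (a-2)(4a-3)·L) / (16·(a - 1/2)²·(3 + (a-2)·L)) ≥ (a-2)(8a+3)/(8(2a-1)²), where L = log(1 + 1/(a-2)). -/
theorem new_bound_ge_old (a : ℝ) (h1 : 3 < a) (h2 : a ≤ 3.7) :
    (a - 2) * (8 * a + 3) / (8 * (2 * a - 1) ^ 2) ≤
      (a - 2) * (12 * a + 9 + (a - 2) * (4 * a - 3) * Real.log (1 + 1 / (a - 2))) /
        (16 * (a - 1 / 2) ^ 2 * (3 + (a - 2) * Real.log (1 + 1 / (a - 2)))) := by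
  have ha : (0:ℝ) < a - 2 := by linarith
  set L := Real.log (1 + 1 / (a - 2)) with hLdef
  have hx : (0:ℝ) < 1 / (a - 2) := by positivity
  have hL : 0 < L := Real.log_pos (by linarith)
  have hLe : (a - 2) * L ≤ 1 := by
    have := Real.log_le_sub_one_of_pos (x := 1 + 1 / (a - 2)) (by linarith)
    have h' : L ≤ 1 / (a - 2) := by linarith
    calc (a - 2) * L ≤ (a - 2) * (1 / (a - 2)) :=
          mul_le_mul_of_nonneg_left h' (le_of_lt ha)
      _ = 1 := by field_simp
  have hd1 : (0:ℝ) < 8 * (2 * a - 1) ^ 2 := by nlinarith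
  have hd2 : (0:ℝ) < 16 * (a - 1 / 2) ^ 2 * (3 + (a - 2) * L) := by
    have : (0:ℝ) < 3 + (a - 2) * L := by nlinarith
    have h12 : (0:ℝ) < (a - 1/2)^2 := by nlinarith
    nlinarith [mul_pos h12 this]
  rw [div_le_div_iff₀ hd1 hd2]
  nlinarith [mul_nonneg (mul_nonneg (le_of_lt ha) (sq_nonneg (2*a-1))) (sub_nonneg.mpr hLe)]
end

section
/- Let f: [0,1] → ℝ be left-continuous and piecewise linear with only positive jump discontinuities, f(0) = f(1) = 0, and suppose f has two successive discontinuities at a₁ < a₂ with f continuous and piecewise linear on (a₁, a₂). If f > 0 on all of (a₁, a₂) or f < 0 on all of (a₁, a₂), then f does not minimize ∫₀¹|f| among all functions satisfying the same structural constraints; in particular, a minimizer f*_strict of the absolute integral over strictly admissible functions has a zero strictly between any two successive discontinuities. -/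
open Set Filter MeasureTheory Topology

lemma leftlim_Iic {f : ℝ → ℝ} {x : ℝ} (h : Filter.Tendsto f (𝓝[<] x) (𝓝 (f x))) :
    ContinuousWithinAt f (Set.Iic x) x := by
  have h1 : ContinuousWithinAt f (Set.Iio x) x := h
  have h2 : ContinuousWithinAt f {x} x := continuousWithinAt_singleton
  have := h1.union h2
  simpa [Set.Iio_union_right] using this

lemma contOn_Icc {f : ℝ → ℝ} {x y : ℝ}
    (hc : ∀ t ∈ Set.Ico x y, ContinuousAt f t)
    (hy : Filter.Tendsto f (𝓝[<] y) (𝓝 (f y))) :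
    ContinuousOn f (Set.Icc x y) := by
  intro t ht
  rcases eq_or_lt_of_le ht.2 with h | h
  · subst h
    exact (leftlim_Iic hy).mono Set.Icc_subset_Iic_self
  · exact (hc t ⟨ht.1, h⟩).continuousWithinAt

lemma rate_decay {f : ℝ → ℝ} {σ x y : ℝ} (hxy : x ≤ y)
    (hcont : ContinuousOn f (Set.Icc x y))
    (hder : ∀ t ∈ Set.Ico x y, ∃ sl, HasDerivWithinAt f sl (Set.Ioi t) t ∧ sl ≤ -σ) :
    f y ≤ f x - σ * (y - x) := by
  classical
  set F' : ℝ → ℝ := fun t => if h : t ∈ Set.Ico x y then (hder t h).choose else 0 with hF'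
  have hder' : ∀ t ∈ Set.Ico x y, HasDerivWithinAt f (F' t) (Set.Ici t) t := by
    intro t ht
    have := (hder t ht).choose_spec.1
    simp only [hF', dif_pos ht]
    exact this.Ici_of_Ioi
  have hbd : ∀ t ∈ Set.Ico x y, F' t ≤ -σ := by
    intro t ht
    simp only [hF', dif_pos ht]
    exact (hder t ht).choose_spec.2
  have hB : ∀ t ∈ Set.Ico x y, HasDerivWithinAt (fun t => f x - σ * (t - x)) (-σ) (Set.Ici t) t := by
    intro t _
    have : HasDerivAt (fun t => f x - σ * (t - x)) (-σ) t := by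
      simpa using (((hasDerivAt_id t).sub_const x).const_mul σ).const_sub (f x)
    exact this.hasDerivWithinAt
  have hBc : ContinuousOn (fun t => f x - σ * (t - x)) (Set.Icc x y) := by fun_prop
  have := image_le_of_deriv_right_le_deriv_boundary hcont hder'
    (by simp) hBc hB hbd (Set.right_mem_Icc.2 hxy)
  linarith [this]

lemma lip_bound {f : ℝ → ℝ} {T σ x y : ℝ} (hσ : 0 < σ) (hT : σ ≤ T) (hxy : x ≤ y)
    (hcont : ContinuousOn f (Set.Icc x y))
    (hder : ∀ t ∈ Set.Ico x y, ∃ sl, HasDerivWithinAt f sl (Set.Ioi t) t ∧ -T ≤ sl ∧ sl ≤ -σ) :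
    |f y - f x| ≤ T * (y - x) := by
  classical
  set F' : ℝ → ℝ := fun t => if h : t ∈ Set.Ico x y then (hder t h).choose else 0 with hF'
  have hder' : ∀ t ∈ Set.Ico x y, HasDerivWithinAt f (F' t) (Set.Ici t) t := by
    intro t ht
    have := (hder t ht).choose_spec.1
    simp only [hF', dif_pos ht]
    exact this.Ici_of_Ioi
  have hbd : ∀ t ∈ Set.Ico x y, ‖F' t‖ ≤ T := by
    intro t ht
    obtain ⟨-, h1, h2⟩ := (hder t ht).choose_spec
    simp only [hF', dif_pos ht, Real.norm_eq_abs]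
    rw [abs_le]
    constructor <;> nlinarith
  have := norm_image_sub_le_of_norm_deriv_right_le_segment hcont hder' hbd y
    (Set.right_mem_Icc.2 hxy)
  simpa [Real.norm_eq_abs] using this


lemma integ_aux {T σ : ℝ} (hσ : 0 < σ) (hT : σ ≤ T) :
    ∀ (J : Finset ℝ) (f : ℝ → ℝ) (c d : ℝ), c < d →
    (∀ x ∈ Set.Ioc c d, Filter.Tendsto f (𝓝[<] x) (𝓝 (f x))) →
    (∀ x ∈ Set.Ioo c d, x ∉ J → ContinuousAt f x) →
    (∃ L, Filter.Tendsto f (𝓝[>] c) (𝓝 L)) →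
    (∀ γ ∈ J, γ ∈ Set.Ioo c d → ∃ L, Filter.Tendsto f (𝓝[>] γ) (𝓝 L)) →
    (∀ x ∈ Set.Ioo c d, x ∉ J → ∃ sl, HasDerivWithinAt f sl (Set.Ioi x) x ∧ -T ≤ sl ∧ sl ≤ -σ) →
    MeasureTheory.IntegrableOn f (Set.Ioc c d) MeasureTheory.volume := by
  intro J
  induction J using Finset.strongInduction with
  | _ J ih =>
    intro f c d hcd hleft hcont hrl hjrl hslope
    by_cases hJ : ∃ γ ∈ J, γ ∈ Set.Ioo c d
    · obtain ⟨γ, hγJ, hγm⟩ := hJ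
      have herase : ∀ x, x ∉ J.erase γ → x ≠ γ → x ∉ J := by
        intro x hx hne hxJ
        exact hx (Finset.mem_erase.2 ⟨hne, hxJ⟩)
      have h1 : MeasureTheory.IntegrableOn f (Set.Ioc c γ) MeasureTheory.volume := by
        refine ih (J.erase γ) (Finset.erase_ssubset hγJ) f c γ hγm.1
          (fun x hx => hleft x ⟨hx.1, hx.2.trans hγm.2.le⟩)
          (fun x hx hxe => hcont x ⟨hx.1, hx.2.trans hγm.2⟩ (herase x hxe hx.2.ne))
          hrl
          (fun γ' hγ' hm => hjrl γ' (Finset.mem_of_mem_erase hγ') ⟨hm.1, hm.2.trans hγm.2⟩)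
          (fun x hx hxe => hslope x ⟨hx.1, hx.2.trans hγm.2⟩ (herase x hxe hx.2.ne))
      have h2 : MeasureTheory.IntegrableOn f (Set.Ioc γ d) MeasureTheory.volume := by
        refine ih (J.erase γ) (Finset.erase_ssubset hγJ) f γ d hγm.2
          (fun x hx => hleft x ⟨hγm.1.trans hx.1, hx.2⟩)
          (fun x hx hxe => hcont x ⟨hγm.1.trans hx.1, hx.2⟩ (herase x hxe hx.1.ne'))
          (hjrl γ hγJ hγm)
          (fun γ' hγ' hm => hjrl γ' (Finset.mem_of_mem_erase hγ') ⟨hγm.1.trans hm.1, hm.2⟩)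
          (fun x hx hxe => hslope x ⟨hγm.1.trans hx.1, hx.2⟩ (herase x hxe hx.1.ne'))
      have := h1.union h2
      rwa [Set.Ioc_union_Ioc_eq_Ioc hγm.1.le hγm.2.le] at this
    · push_neg at hJ
      have hnJ : ∀ x ∈ Set.Ioo c d, x ∉ J := by
        intro x hx hxJ; exact (hJ x hxJ) hx
      obtain ⟨L, hL⟩ := hrl
      -- Lipschitz-type bound on each [y,z] ⊆ (c,d]
      have key : ∀ z ∈ Set.Ioc c d, |f z| ≤ |L| + T * (d - c) := by
        intro z hz
        have hzb : ∀ y ∈ Set.Ioo c z, |f z - f y| ≤ T * (z - y) := by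
          intro y hy
          refine lip_bound hσ hT hy.2.le ?_ ?_
          · refine contOn_Icc (fun t ht => ?_) ?_
            · have htm : t ∈ Set.Ioo c d := ⟨hy.1.trans_le ht.1, ht.2.trans_le hz.2⟩
              exact hcont t htm (hnJ t htm)
            · exact hleft z hz
          · intro t ht
            have htm : t ∈ Set.Ioo c d := ⟨hy.1.trans_le ht.1, ht.2.trans_le hz.2⟩
            exact hslope t htm (hnJ t htm)
        have hlim : Filter.Tendsto (fun y => |f z - f y|) (𝓝[>] c) (𝓝 |f z - L|) :=
          ((tendsto_const_nhds.sub hL).abs)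
        have hev : ∀ᶠ y in 𝓝[>] c, |f z - f y| ≤ T * (d - c) := by
          filter_upwards [Ioo_mem_nhdsGT_of_mem (Set.left_mem_Ico.2 hz.1)] with y hy
          calc |f z - f y| ≤ T * (z - y) := hzb y hy
            _ ≤ T * (d - c) := by
                have : (0:ℝ) < T := lt_of_lt_of_le hσ hT
                have := hy.1; have := hy.2; have := hz.2
                nlinarith
        have h1 : |f z - L| ≤ T * (d - c) := le_of_tendsto hlim hev
        calc |f z| = |L + (f z - L)| := by ring_nf
          _ ≤ |L| + |f z - L| := by
              have := abs_add_le L (f z - L); simpa using this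
          _ ≤ |L| + T * (d - c) := by linarith
      have hmble : MeasureTheory.AEStronglyMeasurable f
          (MeasureTheory.volume.restrict (Set.Ioc c d)) := by
        have hco : ContinuousOn f (Set.Ioo c d) := fun x hx => (hcont x hx (hnJ x hx)).continuousWithinAt
        have := hco.aestronglyMeasurable (μ := MeasureTheory.volume) measurableSet_Ioo
        rwa [MeasureTheory.Measure.restrict_congr_set Ioo_ae_eq_Ioc] at this
      refine ⟨hmble, MeasureTheory.HasFiniteIntegral.restrict_of_bounded (C := |L| + T * (d - c)) ?_ ?_⟩
      · simp [Real.volume_Ioc]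
      · exact (MeasureTheory.ae_restrict_iff' measurableSet_Ioc).2
          (Filter.Eventually.of_forall (fun z hz => by simpa using key z hz))


lemma integral_lt_of_ptwise {f : ℝ → ℝ} {a₁ a₂ u v δ δ₀ : ℝ}
    (h0 : 0 ≤ a₁) (h12 : a₁ < a₂) (h21 : a₂ ≤ 1)
    (hu : a₁ ≤ u) (huv : u ≤ v) (hv : v ≤ a₂)
    (hδ : 0 < δ₀) (hsmall : 2 * (v - u) < a₂ - a₁)
    (hfint : IntervalIntegrable f MeasureTheory.volume 0 1)
    (hae : ∀ x ∈ Set.Ioo a₁ a₂,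
      |f x + δ| ≤ |f x| - δ₀ + (Set.Ioc u v).indicator (fun _ => 2*δ₀) x) :
    (∫ x in (0:ℝ)..1, |f x + (Set.Ioc a₁ a₂).indicator (fun _ => δ) x|)
      < ∫ x in (0:ℝ)..1, |f x| := by
  set g : ℝ → ℝ := fun x => f x + (Set.Ioc a₁ a₂).indicator (fun _ => δ) x with hg
  have hind_int : IntervalIntegrable ((Set.Ioc a₁ a₂).indicator (fun _ => δ))
      MeasureTheory.volume 0 1 := by
    rw [intervalIntegrable_iff_integrableOn_Ioc_of_le zero_le_one]
    exact (MeasureTheory.integrableOn_const (by simp)).indicator measurableSet_Ioc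
  have hind2_int : IntervalIntegrable ((Set.Ioc u v).indicator (fun _ => 2*δ₀))
      MeasureTheory.volume a₁ a₂ := by
    rw [intervalIntegrable_iff_integrableOn_Ioc_of_le h12.le]
    exact (MeasureTheory.integrableOn_const (by simp)).indicator measurableSet_Ioc
  have hg_int : IntervalIntegrable g MeasureTheory.volume 0 1 := hfint.add hind_int
  have hgabs : IntervalIntegrable (fun x => |g x|) MeasureTheory.volume 0 1 := hg_int.abs
  have hfabs : IntervalIntegrable (fun x => |f x|) MeasureTheory.volume 0 1 := hfint.abs
  have hsub1 : Set.uIcc (0:ℝ) a₁ ⊆ Set.uIcc (0:ℝ) 1 := by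
    rw [Set.uIcc_of_le h0, Set.uIcc_of_le zero_le_one]
    exact Set.Icc_subset_Icc le_rfl (h12.le.trans h21)
  have hsub2 : Set.uIcc a₁ a₂ ⊆ Set.uIcc (0:ℝ) 1 := by
    rw [Set.uIcc_of_le h12.le, Set.uIcc_of_le zero_le_one]
    exact Set.Icc_subset_Icc h0 h21
  have hsub3 : Set.uIcc a₂ (1:ℝ) ⊆ Set.uIcc (0:ℝ) 1 := by
    rw [Set.uIcc_of_le h21, Set.uIcc_of_le zero_le_one]
    exact Set.Icc_subset_Icc (h0.trans h12.le) le_rfl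
  have hsub4 : Set.uIcc a₁ (1:ℝ) ⊆ Set.uIcc (0:ℝ) 1 := by
    rw [Set.uIcc_of_le (h12.le.trans h21), Set.uIcc_of_le zero_le_one]
    exact Set.Icc_subset_Icc h0 le_rfl
  have hsplit : ∀ φ : ℝ → ℝ, IntervalIntegrable φ MeasureTheory.volume 0 1 →
      (∫ x in (0:ℝ)..1, φ x) =
      (∫ x in (0:ℝ)..a₁, φ x) + ((∫ x in a₁..a₂, φ x) + ∫ x in a₂..(1:ℝ), φ x) := by
    intro φ hφ
    rw [intervalIntegral.integral_add_adjacent_intervals (hφ.mono_set hsub2)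
        (hφ.mono_set hsub3),
      intervalIntegral.integral_add_adjacent_intervals (hφ.mono_set hsub1)
        (hφ.mono_set hsub4)]
  -- pieces outside the middle agree
  have hpiece1 : (∫ x in (0:ℝ)..a₁, |g x|) = ∫ x in (0:ℝ)..a₁, |f x| := by
    refine intervalIntegral.integral_congr (fun x hx => ?_)
    rw [Set.uIcc_of_le h0] at hx
    have : x ∉ Set.Ioc a₁ a₂ := fun hmem => absurd hx.2 (not_le.2 hmem.1)
    simp [hg, Set.indicator_of_notMem this]
  have hpiece3 : (∫ x in a₂..(1:ℝ), |g x|) = ∫ x in a₂..(1:ℝ), |f x| := by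
    refine intervalIntegral.integral_congr_ae (MeasureTheory.ae_of_all _ (fun x hx => ?_))
    rw [Set.uIoc_of_le h21] at hx
    have : x ∉ Set.Ioc a₁ a₂ := fun hmem => absurd hmem.2 (not_le.2 hx.1)
    simp [hg, Set.indicator_of_notMem this]
  -- middle comparison
  have hrhs_int : IntervalIntegrable
      (fun x => |f x| - δ₀ + (Set.Ioc u v).indicator (fun _ => 2*δ₀) x)
      MeasureTheory.volume a₁ a₂ :=
    (((hfabs.mono_set hsub2)).sub intervalIntegrable_const).add hind2_int
  have hne : ∀ᵐ x : ℝ, x ≠ a₁ ∧ x ≠ a₂ := by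
    have h1 : ∀ᵐ x : ℝ, x ≠ a₁ := by
      rw [MeasureTheory.ae_iff]
      simpa [not_not, Set.setOf_eq_eq_singleton] using measure_singleton  (μ := MeasureTheory.volume) a₁
    have h2 : ∀ᵐ x : ℝ, x ≠ a₂ := by
      rw [MeasureTheory.ae_iff]
      simpa [not_not, Set.setOf_eq_eq_singleton] using measure_singleton  (μ := MeasureTheory.volume) a₂
    exact h1.and h2
  have hmid : (∫ x in a₁..a₂, |g x|) ≤
      ∫ x in a₁..a₂, (|f x| - δ₀ + (Set.Ioc u v).indicator (fun _ => 2*δ₀) x) := by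
    refine intervalIntegral.integral_mono_ae_restrict h12.le (hgabs.mono_set hsub2) hrhs_int ?_
    have hmem := MeasureTheory.ae_restrict_mem (μ := MeasureTheory.volume) (measurableSet_Icc (a := a₁) (b := a₂))
    have hne' := MeasureTheory.ae_restrict_of_ae (s := Set.Icc a₁ a₂) hne
    filter_upwards [hmem, hne'] with x hx hnex
    have hxIoo : x ∈ Set.Ioo a₁ a₂ :=
      ⟨lt_of_le_of_ne hx.1 (Ne.symm hnex.1), lt_of_le_of_ne hx.2 hnex.2⟩
    have hxIoc : x ∈ Set.Ioc a₁ a₂ := ⟨hxIoo.1, hxIoo.2.le⟩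
    have : g x = f x + δ := by simp [hg, Set.indicator_of_mem hxIoc]
    rw [this]
    exact hae x hxIoo
  -- compute the RHS integral
  have hval : (∫ x in a₁..a₂, (|f x| - δ₀ + (Set.Ioc u v).indicator (fun _ => 2*δ₀) x))
      = (∫ x in a₁..a₂, |f x|) - δ₀ * (a₂ - a₁) + 2*δ₀ * (v - u) := by
    rw [intervalIntegral.integral_add ((hfabs.mono_set hsub2).sub intervalIntegrable_const)
      hind2_int,
      intervalIntegral.integral_sub (hfabs.mono_set hsub2) intervalIntegrable_const]
    have hindval : (∫ x in a₁..a₂, (Set.Ioc u v).indicator (fun _ => 2*δ₀) x)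
        = 2*δ₀ * (v - u) := by
      rw [intervalIntegral.integral_of_le h12.le,
        MeasureTheory.integral_indicator measurableSet_Ioc,
        MeasureTheory.Measure.restrict_restrict measurableSet_Ioc,
        Set.inter_eq_left.2 (Set.Ioc_subset_Ioc hu hv),
        MeasureTheory.setIntegral_const]
      simp [Real.volume_Ioc, ENNReal.toReal_ofReal (sub_nonneg.2 huv), mul_comm, huv]
    rw [hindval]
    simp
    ring
  rw [hsplit _ hgabs, hsplit _ hfabs, hpiece1, hpiece3]
  have : (∫ x in a₁..a₂, |g x|) < ∫ x in a₁..a₂, |f x| := by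
    have := hmid
    rw [hval] at this
    nlinarith
  linarith

/-- Structural constraints of (strictly) admissible functions: vanishing at 0 and 1,
left-continuity, finitely many discontinuities all of which are positive jumps, and
slopes (right derivatives off the jump set) between `-T` and `-σ`. -/
def Admissible (T σ : ℝ) (f : ℝ → ℝ) : Prop :=
  f 0 = 0 ∧ f 1 = 0 ∧
  (∀ x ∈ Set.Ioc (0 : ℝ) 1, Filter.Tendsto f (nhdsWithin x (Set.Iio x)) (nhds (f x))) ∧
  ∃ J : Finset ℝ, (↑J : Set ℝ) ⊆ Set.Ioo (0 : ℝ) 1 ∧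
    (∀ x ∈ Set.Ioo (0 : ℝ) 1, x ∉ J → ContinuousAt f x) ∧
    (∀ γ ∈ J, ∃ gp : ℝ,
      Filter.Tendsto f (nhdsWithin γ (Set.Ioi γ)) (nhds gp) ∧ f γ < gp) ∧
    (∀ x ∈ Set.Ico (0 : ℝ) 1, x ∉ J →
      ∃ sl : ℝ, HasDerivWithinAt f sl (Set.Ioi x) x ∧ -T ≤ sl ∧ sl ≤ -σ)

lemma adm_shift {T σ : ℝ} {f : ℝ → ℝ} (hf : Admissible T σ f) {a₁ a₂ : ℝ}
    (h0a₁ : 0 < a₁) (ha₁a₂ : a₁ < a₂) (ha₂1 : a₂ < 1)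
    (hd₁ : ¬ ContinuousAt f a₁) (hd₂ : ¬ ContinuousAt f a₂)
    (hsucc : ∀ x ∈ Set.Ioo a₁ a₂, ContinuousAt f x)
    {gp₁ gp₂ δ : ℝ}
    (hgp₁ : Filter.Tendsto f (𝓝[>] a₁) (𝓝 gp₁))
    (hgp₂ : Filter.Tendsto f (𝓝[>] a₂) (𝓝 gp₂))
    (h1 : f a₁ < gp₁ + δ) (h2 : f a₂ + δ < gp₂) :
    Admissible T σ (fun x => f x + (Set.Ioc a₁ a₂).indicator (fun _ => δ) x) := by
  obtain ⟨hf0, hf1, hleft, J, hJsub, hcontJ, hjump, hslope⟩ := hf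
  set ind : ℝ → ℝ := (Set.Ioc a₁ a₂).indicator (fun _ => δ) with hind
  have ha₁J : a₁ ∈ J := by
    by_contra h
    exact hd₁ (hcontJ a₁ ⟨h0a₁, ha₁a₂.trans ha₂1⟩ h)
  have ha₂J : a₂ ∈ J := by
    by_contra h
    exact hd₂ (hcontJ a₂ ⟨h0a₁.trans ha₁a₂, ha₂1⟩ h)
  have hIooJ : ∀ x ∈ Set.Ioo a₁ a₂, x ∉ J := by
    intro x hx hxJ
    obtain ⟨gp, hgp, hlt⟩ := hjump x hxJ
    have hc : Filter.Tendsto f (𝓝[>] x) (𝓝 (f x)) :=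
      ((hsucc x hx).continuousWithinAt : ContinuousWithinAt f (Set.Ioi x) x)
    exact absurd (tendsto_nhds_unique hgp hc) (ne_of_gt hlt)
  have ind_a₁ : ind a₁ = 0 := Set.indicator_of_notMem (by simp) _
  have ind_a₂ : ind a₂ = δ := Set.indicator_of_mem (show a₂ ∈ Set.Ioc a₁ a₂ from ⟨ha₁a₂, le_rfl⟩) (fun _ => δ)
  refine ⟨?_, ?_, ?_, J, hJsub, ?_, ?_, ?_⟩
  · have : (0:ℝ) ∉ Set.Ioc a₁ a₂ := fun h => absurd h.1 (not_lt.2 h0a₁.le)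
    simp [hind, Set.indicator_of_notMem this, hf0]
  · have : (1:ℝ) ∉ Set.Ioc a₁ a₂ := fun h => absurd h.2 (not_le.2 ha₂1)
    simp [hind, Set.indicator_of_notMem this, hf1]
  · -- left continuity
    intro x hx
    have hev : ind =ᶠ[𝓝[<] x] fun _ => ind x := by
      rcases le_or_gt x a₁ with h | h
      · filter_upwards [self_mem_nhdsWithin] with y hy
        have h1' : y ∉ Set.Ioc a₁ a₂ := fun hm => absurd hm.1 (not_lt.2 ((le_of_lt hy).trans h))
        have h2' : x ∉ Set.Ioc a₁ a₂ := fun hm => absurd hm.1 (not_lt.2 h)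
        simp [hind, Set.indicator_of_notMem h1', Set.indicator_of_notMem h2' (fun _ => δ)]
      · rcases le_or_gt x a₂ with h' | h'
        · filter_upwards [Ioo_mem_nhdsLT h] with y hy
          have h1' : y ∈ Set.Ioc a₁ a₂ := ⟨hy.1, hy.2.le.trans h'⟩
          have h2' : x ∈ Set.Ioc a₁ a₂ := ⟨h, h'⟩
          simp [hind, Set.indicator_of_mem h1', Set.indicator_of_mem h2' (fun _ => δ)]
        · filter_upwards [Ioo_mem_nhdsLT h'] with y hy
          have h1' : y ∉ Set.Ioc a₁ a₂ := fun hm => absurd hy.1 (not_lt.2 hm.2)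
          have h2' : x ∉ Set.Ioc a₁ a₂ := fun hm => absurd hm.2 (not_le.2 h')
          simp [hind, Set.indicator_of_notMem h1', Set.indicator_of_notMem h2' (fun _ => δ)]
    exact (hleft x hx).add (tendsto_const_nhds.congr' hev.symm)
  · -- continuity off J
    intro x hx hxJ
    have hxa₁ : x ≠ a₁ := fun h => hxJ (h ▸ ha₁J)
    have hxa₂ : x ≠ a₂ := fun h => hxJ (h ▸ ha₂J)
    have hev : ind =ᶠ[𝓝 x] fun _ => ind x := by
      rcases lt_trichotomy x a₁ with h | h | h
      · filter_upwards [Iio_mem_nhds h] with y hy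
        have h1' : y ∉ Set.Ioc a₁ a₂ := fun hm => absurd hm.1 (not_lt.2 hy.le)
        have h2' : x ∉ Set.Ioc a₁ a₂ := fun hm => absurd hm.1 (not_lt.2 h.le)
        simp [hind, Set.indicator_of_notMem h1', Set.indicator_of_notMem h2' (fun _ => δ)]
      · exact absurd h hxa₁
      · rcases lt_trichotomy x a₂ with h' | h' | h'
        · filter_upwards [Ioo_mem_nhds h h'] with y hy
          have h1' : y ∈ Set.Ioc a₁ a₂ := ⟨hy.1, hy.2.le⟩
          have h2' : x ∈ Set.Ioc a₁ a₂ := ⟨h, h'.le⟩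
          simp [hind, Set.indicator_of_mem h1', Set.indicator_of_mem h2' (fun _ => δ)]
        · exact absurd h' hxa₂
        · filter_upwards [Ioi_mem_nhds h'] with y hy
          have h1' : y ∉ Set.Ioc a₁ a₂ := fun hm => absurd hy (not_lt.2 hm.2)
          have h2' : x ∉ Set.Ioc a₁ a₂ := fun hm => absurd hm.2 (not_le.2 h')
          simp [hind, Set.indicator_of_notMem h1', Set.indicator_of_notMem h2' (fun _ => δ)]
    exact (hcontJ x hx hxJ).add hev.continuousAt
  · -- jumps
    intro γ hγ
    by_cases hγ₁ : γ = a₁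
    · rw [hγ₁]
      refine ⟨gp₁ + δ, ?_, ?_⟩
      · refine hgp₁.add (tendsto_const_nhds.congr' ?_)
        filter_upwards [Ioo_mem_nhdsGT ha₁a₂] with y hy
        simp [hind, Set.indicator_of_mem (show y ∈ Set.Ioc a₁ a₂ from ⟨hy.1, hy.2.le⟩) (fun _ => δ)]
      · simpa [ind_a₁] using h1
    · by_cases hγ₂ : γ = a₂
      · rw [hγ₂]
        refine ⟨gp₂, ?_, ?_⟩
        · have : Filter.Tendsto (fun y => f y + ind y) (𝓝[>] a₂) (𝓝 (gp₂ + 0)) := by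
            refine hgp₂.add (tendsto_const_nhds.congr' ?_)
            filter_upwards [self_mem_nhdsWithin] with y hy
            simp [hind, Set.indicator_of_notMem
              (fun hm => absurd (hy : a₂ < y) (not_lt.2 hm.2) : y ∉ Set.Ioc a₁ a₂)]
          simpa using this
        · simpa [ind_a₂] using h2
      · obtain ⟨gp, hgp, hlt⟩ := hjump γ hγ
        have hγout : γ < a₁ ∨ a₂ < γ := by
          rcases lt_trichotomy γ a₁ with h | h | h
          · exact Or.inl h
          · exact absurd h hγ₁
          · rcases lt_trichotomy γ a₂ with h' | h' | h'
            · exact absurd (hIooJ γ ⟨h, h'⟩) (not_not_intro hγ)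
            · exact absurd h' hγ₂
            · exact Or.inr h'
        have hγnm : γ ∉ Set.Ioc a₁ a₂ := by
          rcases hγout with h | h
          · exact fun hm => absurd hm.1 (not_lt.2 h.le)
          · exact fun hm => absurd hm.2 (not_le.2 h)
        refine ⟨gp, ?_, by simpa [hind, Set.indicator_of_notMem hγnm (fun _ => δ)] using hlt⟩
        have : Filter.Tendsto (fun y => f y + ind y) (𝓝[>] γ) (𝓝 (gp + 0)) := by
          refine hgp.add (tendsto_const_nhds.congr' ?_)
          rcases hγout with h | h
          · filter_upwards [Ioo_mem_nhdsGT h] with y hy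
            simp [hind, Set.indicator_of_notMem
              (fun hm => absurd hm.1 (not_lt.2 hy.2.le) : y ∉ Set.Ioc a₁ a₂)]
          · filter_upwards [self_mem_nhdsWithin] with y hy
            simp [hind, Set.indicator_of_notMem
              (fun hm => absurd (h.trans hy) (not_lt.2 hm.2) : y ∉ Set.Ioc a₁ a₂)]
        simpa using this
  · -- slopes
    intro x hx hxJ
    obtain ⟨sl, hsl, hb1, hb2⟩ := hslope x hx hxJ
    refine ⟨sl, ?_, hb1, hb2⟩
    have hxa₁ : x ≠ a₁ := fun h => hxJ (h ▸ ha₁J)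
    have hxa₂ : x ≠ a₂ := fun h => hxJ (h ▸ ha₂J)
    rcases lt_trichotomy x a₁ with h | h | h
    · refine hsl.congr_of_eventuallyEq ?_ ?_
      · filter_upwards [Ioo_mem_nhdsGT h] with y hy
        have : y ∉ Set.Ioc a₁ a₂ := fun hm => absurd hm.1 (not_lt.2 hy.2.le)
        simp [hind, Set.indicator_of_notMem this (fun _ => δ)]
      · have : x ∉ Set.Ioc a₁ a₂ := fun hm => absurd hm.1 (not_lt.2 h.le)
        simp [hind, Set.indicator_of_notMem this (fun _ => δ)]
    · exact absurd h hxa₁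
    · rcases lt_trichotomy x a₂ with h' | h' | h'
      · refine (hsl.add_const δ).congr_of_eventuallyEq ?_ ?_
        · filter_upwards [Ioo_mem_nhdsGT h'] with y hy
          have : y ∈ Set.Ioc a₁ a₂ := ⟨h.trans hy.1, hy.2.le⟩
          simp [hind, Set.indicator_of_mem this (fun _ => δ)]
        · have : x ∈ Set.Ioc a₁ a₂ := ⟨h, h'.le⟩
          simp [hind, Set.indicator_of_mem this (fun _ => δ)]
      · exact absurd h' hxa₂
      · refine hsl.congr_of_eventuallyEq ?_ ?_
        · filter_upwards [self_mem_nhdsWithin] with y hy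
          have : y ∉ Set.Ioc a₁ a₂ := fun hm => absurd (h'.trans hy) (not_lt.2 hm.2)
          simp [hind, Set.indicator_of_notMem this (fun _ => δ)]
        · have : x ∉ Set.Ioc a₁ a₂ := fun hm => absurd hm.2 (not_le.2 h')
          simp [hind, Set.indicator_of_notMem this (fun _ => δ)]

/-- Lemma 2: between two successive discontinuities of a minimizer there is a zero;
equivalently, a function of constant sign between two successive discontinuities
does not minimize the absolute integral. -/
theorem zero_between_jumps (T σ : ℝ) (hσ : 0 < σ) (hT : σ ≤ T)
    (f : ℝ → ℝ) (hf : Admissible T σ f)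
    (a₁ a₂ : ℝ) (h0a₁ : 0 < a₁) (ha₁a₂ : a₁ < a₂) (ha₂1 : a₂ < 1)
    (hd₁ : ¬ ContinuousAt f a₁) (hd₂ : ¬ ContinuousAt f a₂)
    (hsucc : ∀ x ∈ Set.Ioo a₁ a₂, ContinuousAt f x) :
    (((∀ x ∈ Set.Ioo a₁ a₂, 0 < f x) ∨ (∀ x ∈ Set.Ioo a₁ a₂, f x < 0)) →
      ∃ g : ℝ → ℝ, Admissible T σ g ∧
        (∫ x in (0:ℝ)..1, |g x|) < ∫ x in (0:ℝ)..1, |f x|) ∧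
    ((∀ g : ℝ → ℝ, Admissible T σ g →
        (∫ x in (0:ℝ)..1, |f x|) ≤ ∫ x in (0:ℝ)..1, |g x|) →
      ∃ z ∈ Set.Ioo a₁ a₂, f z = 0) := by
  obtain ⟨hf0, hf1, hleft, J, hJsub, hcontJ, hjump, hslope⟩ := id hf
  have ha₁J : a₁ ∈ J := by
    by_contra h
    exact hd₁ (hcontJ a₁ ⟨h0a₁, ha₁a₂.trans ha₂1⟩ h)
  have ha₂J : a₂ ∈ J := by
    by_contra h
    exact hd₂ (hcontJ a₂ ⟨h0a₁.trans ha₁a₂, ha₂1⟩ h)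
  obtain ⟨gp₁, hgp₁, hj₁⟩ := hjump a₁ ha₁J
  obtain ⟨gp₂, hgp₂, hj₂⟩ := hjump a₂ ha₂J
  have hIooJ : ∀ x ∈ Set.Ioo a₁ a₂, x ∉ J := by
    intro x hx hxJ
    obtain ⟨gp, hgp, hlt⟩ := hjump x hxJ
    have hc : Filter.Tendsto f (𝓝[>] x) (𝓝 (f x)) :=
      ((hsucc x hx).continuousWithinAt : ContinuousWithinAt f (Set.Ioi x) x)
    exact absurd (tendsto_nhds_unique hgp hc) (ne_of_gt hlt)
  -- integrability of f
  have hfint : IntervalIntegrable f MeasureTheory.volume 0 1 := by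
    rw [intervalIntegrable_iff_integrableOn_Ioc_of_le zero_le_one]
    refine integ_aux hσ hT J f 0 1 one_pos hleft hcontJ ?_
      (fun γ hγ _ => (hjump γ hγ).imp (fun gp h => h.1))
      (fun x hx hxJ => hslope x (Set.Ioo_subset_Ico_self hx) hxJ)
    have h0J : (0:ℝ) ∉ J := fun h => absurd (hJsub h).1 (lt_irrefl 0)
    obtain ⟨sl, hsl, -, -⟩ := hslope 0 ⟨le_refl 0, one_pos⟩ h0J
    exact ⟨f 0, hsl.continuousWithinAt⟩
  -- quantitative decay on the continuity interval
  have hrate : ∀ x ∈ Set.Ioo a₁ a₂, ∀ y, x ≤ y → y ≤ a₂ → f y ≤ f x - σ * (y - x) := by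
    intro x hx y hxy hy
    refine rate_decay hxy
      (contOn_Icc (fun t ht => hsucc t ⟨hx.1.trans_le ht.1, ht.2.trans_le hy⟩)
        (hleft y ⟨h0a₁.trans (hx.1.trans_le hxy), hy.trans ha₂1.le⟩)) ?_
    intro t ht
    have htm : t ∈ Set.Ioo a₁ a₂ := ⟨hx.1.trans_le ht.1, ht.2.trans_le hy⟩
    obtain ⟨sl, hsl, -, hsl2⟩ := hslope t ⟨(h0a₁.trans htm.1).le, htm.2.trans ha₂1⟩
      (hIooJ t htm)
    exact ⟨sl, hsl, hsl2⟩
  have hm : (0:ℝ) < a₂ - a₁ := sub_pos.2 ha₁a₂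
  have part1 : ((∀ x ∈ Set.Ioo a₁ a₂, 0 < f x) ∨ (∀ x ∈ Set.Ioo a₁ a₂, f x < 0)) →
      ∃ g : ℝ → ℝ, Admissible T σ g ∧
        (∫ x in (0:ℝ)..1, |g x|) < ∫ x in (0:ℝ)..1, |f x| := by
    rintro (hpos | hneg)
    · -- f positive between the jumps: push the part after a₁ down by δ₀
      have hfa₂ : 0 ≤ f a₂ := by
        refine ge_of_tendsto (hleft a₂ ⟨h0a₁.trans ha₁a₂, ha₂1.le⟩) ?_
        filter_upwards [Ioo_mem_nhdsLT_of_mem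
          (show a₂ ∈ Set.Ioc a₁ a₂ from ⟨ha₁a₂, le_rfl⟩)] with y hy
        exact (hpos y hy).le
      have hjp : 0 < gp₁ - f a₁ := sub_pos.2 hj₁
      set δ₀ : ℝ := min (σ * (a₂ - a₁) / 4) (gp₁ - f a₁) / 2 with hδ₀
      have hminpos : 0 < min (σ * (a₂ - a₁) / 4) (gp₁ - f a₁) :=
        lt_min (by positivity) hjp
      have hδ₀pos : 0 < δ₀ := by rw [hδ₀]; linarith
      have hδ₀le : δ₀ ≤ σ * (a₂ - a₁) / 8 := by
        have := min_le_left (σ * (a₂ - a₁) / 4) (gp₁ - f a₁)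
        rw [hδ₀]; linarith
      have hδ₀lt : δ₀ < gp₁ - f a₁ := by
        have := min_le_right (σ * (a₂ - a₁) / 4) (gp₁ - f a₁)
        rw [hδ₀]; linarith
      have hds : δ₀ / σ ≤ (a₂ - a₁) / 8 := by
        rw [div_le_iff₀ hσ]
        nlinarith
      have hds0 : 0 ≤ δ₀ / σ := div_nonneg hδ₀pos.le hσ.le
      set u : ℝ := a₂ - δ₀ / σ with hu
      have hadm2 := adm_shift hf h0a₁ ha₁a₂ ha₂1 hd₁ hd₂ hsucc hgp₁ hgp₂
        (δ := -δ₀) (by linarith) (by linarith)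
      refine ⟨_, hadm2, ?_⟩
      refine integral_lt_of_ptwise (u := u) (v := a₂) h0a₁.le ha₁a₂ ha₂1.le
        (by rw [hu]; linarith) (by rw [hu]; linarith) le_rfl hδ₀pos
        (by rw [hu]; linarith) hfint ?_
      intro x hx
      by_cases hxu : x ≤ u
      · have hfx : δ₀ ≤ f x := by
          have h1 := hrate x hx a₂ hx.2.le le_rfl
          have h2 : δ₀ / σ ≤ a₂ - x := by rw [hu] at hxu; linarith
          have h3 : δ₀ ≤ σ * (a₂ - x) := by
            have := mul_le_mul_of_nonneg_left h2 hσ.le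
            calc δ₀ = σ * (δ₀ / σ) := by field_simp
              _ ≤ σ * (a₂ - x) := this
          linarith
        have hindnn : 0 ≤ (Set.Ioc u a₂).indicator (fun _ => 2*δ₀) x :=
          Set.indicator_nonneg (fun _ _ => by linarith) x
        rw [abs_of_pos (hpos x hx), abs_of_nonneg (by linarith : (0:ℝ) ≤ f x + -δ₀)]
        linarith
      · push_neg at hxu
        rw [Set.indicator_of_mem (show x ∈ Set.Ioc u a₂ from ⟨hxu, hx.2.le⟩)
          (fun _ => 2*δ₀)]
        have habs : |f x + -δ₀| ≤ |f x| + δ₀ := by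
          calc |f x + -δ₀| ≤ |f x| + |-δ₀| := abs_add_le _ _
            _ = |f x| + δ₀ := by rw [abs_neg, abs_of_pos hδ₀pos]
        linarith
    · -- f negative between the jumps: push the part after a₁ up by δ₀
      have hgp₁le : gp₁ ≤ 0 := by
        refine le_of_tendsto hgp₁ ?_
        filter_upwards [Ioo_mem_nhdsGT ha₁a₂] with y hy
        exact (hneg y hy).le
      have hjp : 0 < gp₂ - f a₂ := sub_pos.2 hj₂
      set δ₀ : ℝ := min (σ * (a₂ - a₁) / 4) (gp₂ - f a₂) / 2 with hδ₀
      have hminpos : 0 < min (σ * (a₂ - a₁) / 4) (gp₂ - f a₂) :=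
        lt_min (by positivity) hjp
      have hδ₀pos : 0 < δ₀ := by rw [hδ₀]; linarith
      have hδ₀le : δ₀ ≤ σ * (a₂ - a₁) / 8 := by
        have := min_le_left (σ * (a₂ - a₁) / 4) (gp₂ - f a₂)
        rw [hδ₀]; linarith
      have hδ₀lt : δ₀ < gp₂ - f a₂ := by
        have := min_le_right (σ * (a₂ - a₁) / 4) (gp₂ - f a₂)
        rw [hδ₀]; linarith
      have hds : δ₀ / σ ≤ (a₂ - a₁) / 8 := by
        rw [div_le_iff₀ hσ]
        nlinarith
      have hds0 : 0 ≤ δ₀ / σ := div_nonneg hδ₀pos.le hσ.le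
      set v : ℝ := a₁ + δ₀ / σ with hv
      -- decay from the right limit at a₁
      have hrate2 : ∀ x ∈ Set.Ioo a₁ a₂, f x ≤ gp₁ - σ * (x - a₁) := by
        intro x hx
        have ht : Filter.Tendsto (fun y => f y - σ * (x - y)) (𝓝[>] a₁)
            (𝓝 (gp₁ - σ * (x - a₁))) :=
          hgp₁.sub (((continuous_const.mul (continuous_const.sub continuous_id)).tendsto
            a₁).mono_left nhdsWithin_le_nhds)
        refine ge_of_tendsto ht ?_
        filter_upwards [Ioo_mem_nhdsGT hx.1] with y hy
        have := hrate y ⟨hy.1, hy.2.trans hx.2⟩ x hy.2.le hx.2.le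
        linarith
      have hadm2 := adm_shift hf h0a₁ ha₁a₂ ha₂1 hd₁ hd₂ hsucc hgp₁ hgp₂
        (δ := δ₀) (by linarith) (by linarith)
      refine ⟨_, hadm2, ?_⟩
      refine integral_lt_of_ptwise (u := a₁) (v := v) h0a₁.le ha₁a₂ ha₂1.le
        le_rfl (by rw [hv]; linarith) (by rw [hv]; linarith) hδ₀pos
        (by rw [hv]; linarith) hfint ?_
      intro x hx
      by_cases hxv : x ≤ v
      · rw [Set.indicator_of_mem (show x ∈ Set.Ioc a₁ v from ⟨hx.1, hxv⟩)
          (fun _ => 2*δ₀)]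
        have habs : |f x + δ₀| ≤ |f x| + δ₀ := by
          calc |f x + δ₀| ≤ |f x| + |δ₀| := abs_add_le _ _
            _ = |f x| + δ₀ := by rw [abs_of_pos hδ₀pos]
        linarith
      · push_neg at hxv
        have hfx : f x ≤ -δ₀ := by
          have h1 := hrate2 x hx
          have h2 : δ₀ / σ ≤ x - a₁ := by rw [hv] at hxv; linarith
          have h3 : δ₀ ≤ σ * (x - a₁) := by
            have := mul_le_mul_of_nonneg_left h2 hσ.le
            calc δ₀ = σ * (δ₀ / σ) := by field_simp
              _ ≤ σ * (x - a₁) := this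
          linarith
        have hindnn : 0 ≤ (Set.Ioc a₁ v).indicator (fun _ => 2*δ₀) x :=
          Set.indicator_nonneg (fun _ _ => by linarith) x
        rw [abs_of_neg (hneg x hx), abs_of_nonpos (by linarith : f x + δ₀ ≤ 0)]
        linarith
  refine ⟨part1, ?_⟩
  intro hmin
  by_contra hno
  push_neg at hno
  have huIccsub : ∀ x ∈ Set.Ioo a₁ a₂, ∀ y ∈ Set.Ioo a₁ a₂,
      Set.uIcc x y ⊆ Set.Ioo a₁ a₂ := by
    intro x hx y hy t ht
    rw [Set.mem_uIcc] at ht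
    rcases ht with ⟨h1, h2⟩ | ⟨h1, h2⟩
    · exact ⟨hx.1.trans_le h1, lt_of_le_of_lt h2 hy.2⟩
    · exact ⟨hy.1.trans_le h1, lt_of_le_of_lt h2 hx.2⟩
  have hcIoo : ∀ x ∈ Set.Ioo a₁ a₂, ∀ y ∈ Set.Ioo a₁ a₂,
      ContinuousOn f (Set.uIcc x y) := by
    intro x hx y hy t ht
    exact (hsucc t (huIccsub x hx y hy ht)).continuousWithinAt
  have hz₀ : (a₁ + a₂)/2 ∈ Set.Ioo a₁ a₂ := ⟨by linarith, by linarith⟩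
  have hsign : (∀ x ∈ Set.Ioo a₁ a₂, 0 < f x) ∨ (∀ x ∈ Set.Ioo a₁ a₂, f x < 0) := by
    rcases lt_or_gt_of_ne (hno ((a₁ + a₂)/2) hz₀) with hneg0 | hpos0
    · refine Or.inr (fun x hx => ?_)
      by_contra hle
      push_neg at hle
      have h0x : 0 < f x := lt_of_le_of_ne hle (Ne.symm (hno x hx))
      have h0mem : (0:ℝ) ∈ Set.uIcc (f x) (f ((a₁ + a₂)/2)) :=
        Set.mem_uIcc.2 (Or.inr ⟨hneg0.le, h0x.le⟩)
      obtain ⟨c, hc, hc0⟩ := intermediate_value_uIcc (hcIoo x hx _ hz₀) h0mem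
      exact hno c (huIccsub x hx _ hz₀ hc) hc0
    · refine Or.inl (fun x hx => ?_)
      by_contra hle
      push_neg at hle
      have h0x : f x < 0 := lt_of_le_of_ne hle (hno x hx)
      have h0mem : (0:ℝ) ∈ Set.uIcc (f x) (f ((a₁ + a₂)/2)) :=
        Set.mem_uIcc.2 (Or.inl ⟨h0x.le, hpos0.le⟩)
      obtain ⟨c, hc, hc0⟩ := intermediate_value_uIcc (hcIoo x hx _ hz₀) h0mem
      exact hno c (huIccsub x hx _ hz₀ hc) hc0
  obtain ⟨g, hg, hlt⟩ := part1 hsign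
  exact absurd (hmin g hg) (not_le.2 hlt)
end

section
/- In the setting of the preceding lemma, with j = aᵗ - a^{t-1} + k and x̄ ∈ (x_j, x_{r_j}) a point where the slope s(x̄) of f satisfies s(x̄) > -a^{t-1}(a-2) - k, any index n̄₂ ∈ A₂ maximizing D_n(x̄) over A₂ satisfies n̄₂ < j. -/
/-- The maximizing index over A₂ at x̄ is smaller than j. -/
theorem maximizer_lt_j (a t : ℕ) (ha : 3 ≤ a) (ht : 1 ≤ t)
    (x : ℕ → ℝ) (hx : ∀ i ∈ Finset.Icc 1 (a ^ t), x i ∈ Set.Ico (0 : ℝ) 1)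
    (D : ℕ → ℝ → ℝ)
    (hD : ∀ n y, D n y =
      (((Finset.Icc 1 n).filter (fun i => x i < y)).card : ℝ) - n * y)
    (k j : ℕ) (hk1 : 1 ≤ k) (hk2 : k < a ^ (t - 1))
    (hj : j = a ^ t - a ^ (t - 1) + k)
    (xb : ℝ)
    (n2 : ℕ) (hn2 : n2 ∈ Finset.Icc (a ^ t - a ^ (t - 1) + 1) (a ^ t))
    (hn2max : ∀ m ∈ Finset.Icc (a ^ t - a ^ (t - 1) + 1) (a ^ t), D m xb ≤ D n2 xb)
    (n0 : ℕ) (hn0 : n0 ∈ Finset.Icc 1 (a ^ (t - 1)))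
    (hn0max : ∀ m ∈ Finset.Icc 1 (a ^ (t - 1)), D m xb ≤ D n0 xb)
    -- the slope of f at x̄ equals n̄₀ - n̄₂ and exceeds s₀ - k
    (hslope : -((a : ℝ) ^ (t - 1) * ((a : ℝ) - 2)) - k < (n0 : ℝ) - (n2 : ℝ)) :
    n2 < j := by
  have h0 : n0 ≤ a ^ (t - 1) := (Finset.mem_Icc.mp hn0).2
  have hle : a ^ (t - 1) ≤ a ^ t := Nat.pow_le_pow_right (by omega) (by omega)
  have hat : a ^ t = a ^ (t - 1) * a := by
    conv_lhs => rw [← Nat.sub_add_cancel ht]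
    rw [pow_succ]
  have hatR : (a : ℝ) ^ t = (a : ℝ) ^ (t - 1) * a := by exact_mod_cast hat
  have hjr : (j : ℝ) = (a : ℝ) ^ t - (a : ℝ) ^ (t - 1) + k := by
    rw [hj]; push_cast [hle]; ring
  have h0R : (n0 : ℝ) ≤ (a : ℝ) ^ (t - 1) := by exact_mod_cast h0
  have : (n2 : ℝ) < (j : ℝ) := by rw [hjr, hatR]; linarith
  exact_mod_cast this
end

section
/- Let g: [c, d] → ℝ be continuous and piecewise linear with exactly one bend at y ∈ (c, d), with slope s₁ on [c, y] and slope s₂ on [y, d], where s₁ > s₂ (slope decreases), both slopes negative, and g > 0 on [c, d]. Define g̃ on [c, d] by swapping the order of the two linear pieces: g̃ has slope s₂ on [c, c + (d - y)] and slope s₁ on [c + (d - y), d], with g̃(c) = g(c). Then g̃(d) = g(d) and ∫_c^d g̃(x) dx < ∫_c^d g(x) dx. -/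
open intervalIntegral MeasureTheory

lemma affine_int (a b k m : ℝ) :
    (∫ x in a..b, (k + m * (x - a))) = k * (b - a) + m * ((b - a) ^ 2 / 2) := by
  have h : (fun x => k + m * (x - a)) = fun x => (k - m * a) + m * x := by
    funext x; ring
  rw [h, intervalIntegral.integral_add intervalIntegrable_const
    (intervalIntegrable_id.const_mul m), intervalIntegral.integral_const,
    intervalIntegral.integral_const_mul, integral_id, smul_eq_mul]
  ring

lemma split_int (a b e : ℝ) (hab : a ≤ b) (hbe : b ≤ e) (f p q : ℝ → ℝ)
    (hp : Continuous p) (hq : Continuous q)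
    (h1 : ∀ x ∈ Set.Icc a b, f x = p x) (h2 : ∀ x ∈ Set.Icc b e, f x = q x) :
    (∫ x in a..e, f x) = (∫ x in a..b, p x) + ∫ x in b..e, q x := by
  have i1 : IntervalIntegrable f volume a b := by
    rw [intervalIntegrable_iff_integrableOn_Icc_of_le hab]
    exact hp.integrableOn_Icc.congr_fun (fun x hx => (h1 x hx).symm) measurableSet_Icc
  have i2 : IntervalIntegrable f volume b e := by
    rw [intervalIntegrable_iff_integrableOn_Icc_of_le hbe]
    exact hq.integrableOn_Icc.congr_fun (fun x hx => (h2 x hx).symm) measurableSet_Icc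
  rw [← intervalIntegral.integral_add_adjacent_intervals i1 i2,
    intervalIntegral.integral_congr (g := p)
      (fun x hx => h1 x (by rwa [Set.uIcc_of_le hab] at hx)),
    intervalIntegral.integral_congr (g := q)
      (fun x hx => h2 x (by rwa [Set.uIcc_of_le hbe] at hx))]

/-- Piece-swapping argument: putting the steeper of two adjacent linear pieces first
strictly decreases the integral of a positive piecewise-linear function while
preserving the endpoint values. -/
theorem swap_pieces (c d y s1 s2 : ℝ) (hcy : c < y) (hyd : y < d)
    (hs1 : s1 < 0) (hs2 : s2 < 0) (hs12 : s2 < s1)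
    (g gt : ℝ → ℝ)
    (hg1 : ∀ x ∈ Set.Icc c y, g x = g c + s1 * (x - c))
    (hg2 : ∀ x ∈ Set.Icc y d, g x = g y + s2 * (x - y))
    (hgt0 : gt c = g c)
    (hgt1 : ∀ x ∈ Set.Icc c (c + (d - y)), gt x = gt c + s2 * (x - c))
    (hgt2 : ∀ x ∈ Set.Icc (c + (d - y)) d,
      gt x = gt (c + (d - y)) + s1 * (x - (c + (d - y))))
    (hpos : ∀ x ∈ Set.Icc c d, 0 < g x) :
    gt d = g d ∧ (∫ x in c..d, gt x) < ∫ x in c..d, g x := by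
  set m : ℝ := c + (d - y) with hm
  have hcm : c ≤ m := by simp [hm]; linarith
  have hmd : m ≤ d := by simp [hm]; linarith
  have hgy : g y = g c + s1 * (y - c) :=
    hg1 y ⟨le_of_lt hcy, le_refl y⟩
  have hgd : g d = g y + s2 * (d - y) :=
    hg2 d ⟨le_of_lt hyd, le_refl d⟩
  have hgtm : gt m = gt c + s2 * (m - c) :=
    hgt1 m ⟨hcm, le_refl m⟩
  have hgtd : gt d = gt m + s1 * (d - m) :=
    hgt2 d ⟨hmd, le_refl d⟩
  have hend : gt d = g d := by
    rw [hgtd, hgtm, hgt0, hgd, hgy]; ring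
  refine ⟨hend, ?_⟩
  have Hg : (∫ x in c..d, g x)
      = (∫ x in c..y, (g c + s1 * (x - c))) + ∫ x in y..d, (g y + s2 * (x - y)) := by
    exact split_int c y d hcy.le hyd.le g _ _
      (by fun_prop) (by fun_prop) hg1 hg2
  have Hgt : (∫ x in c..d, gt x)
      = (∫ x in c..m, (gt c + s2 * (x - c))) + ∫ x in m..d, (gt m + s1 * (x - m)) := by
    exact split_int c m d hcm hmd gt _ _
      (by fun_prop) (by fun_prop) hgt1 hgt2
  rw [Hg, Hgt, affine_int, affine_int, affine_int, affine_int, hgy, hgtm, hgt0, hm]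
  nlinarith [mul_pos (sub_pos.mpr hcy) (sub_pos.mpr hyd), sub_pos.mpr hs12]
end

section
/- For all a with 3 ≤ a ≤ 3.7 and positive integers m and s with s = ⌈(a-2)m⌉ ≥ 1, the quantity (1/2)·(3m - 1 + s·∑_{n=s+1}^{s+m-1} 1/n) is at most (m/2)·(3 + (a-2)·log(1 + 1/(a-2))). -/
theorem denominator_bound (a : ℝ) (ha1 : 3 ≤ a) (ha2 : a ≤ 3.7)
    (m s : ℕ) (hm : 1 ≤ m) (hs : 1 ≤ s) (hsm : s = ⌈(a - 2) * m⌉₊) :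
    (1 / 2 : ℝ) * (3 * m - 1 + s * ∑ n ∈ Finset.Icc (s + 1) (s + m - 1), (1 : ℝ) / n) ≤
      (m / 2 : ℝ) * (3 + (a - 2) * Real.log (1 + 1 / (a - 2))) := by
  set c := a - 2 with hc
  have hc1 : (1:ℝ) ≤ c := by linarith
  have hc0 : (0:ℝ) < c := by linarith
  have hM1 : (1:ℝ) ≤ (m:ℝ) := by exact_mod_cast hm
  have hS1 : (1:ℝ) ≤ (s:ℝ) := by exact_mod_cast hs
  have hTS : c * m ≤ (s:ℝ) := by rw [hsm]; exact Nat.le_ceil _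
  have hST : (s:ℝ) ≤ c * m + 1 := by
    rw [hsm]
    exact le_of_lt (Nat.ceil_lt_add_one (by positivity))
  -- Step A: bound the sum by a telescoping log sum
  have hsum : ∑ n ∈ Finset.Icc (s + 1) (s + m - 1), (1 : ℝ) / n ≤
      Real.log ((s:ℝ) + m) - Real.log s := by
    have h1 : ∑ n ∈ Finset.Icc (s + 1) (s + m - 1), (1 : ℝ) / n ≤
        ∑ i ∈ Finset.range (m - 1),
          (Real.log ((s:ℝ) + (i + 1)) - Real.log ((s:ℝ) + i)) := by
      have hico : Finset.Icc (s + 1) (s + m - 1) = Finset.Ico (s + 1) (s + m) := by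
        rw [← Finset.Ico_add_one_right_eq_Icc]
        congr 1
        omega
      rw [hico, Finset.sum_Ico_eq_sum_range]
      have hr : s + m - (s + 1) = m - 1 := by omega
      rw [hr]
      apply Finset.sum_le_sum
      intro i _
      have hx : (0:ℝ) < (s:ℝ) + i := by positivity
      have hx1 : (0:ℝ) < (s:ℝ) + i + 1 := by positivity
      have h := Real.log_le_sub_one_of_pos
        (show (0:ℝ) < ((s:ℝ) + i) / ((s:ℝ) + i + 1) by positivity)
      rw [Real.log_div (ne_of_gt hx) (ne_of_gt hx1)] at h
      have heq : ((s:ℝ) + i) / ((s:ℝ) + i + 1) - 1 = -(1 / ((s:ℝ) + i + 1)) := by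
        field_simp
        ring
      rw [heq] at h
      push_cast
      have : (1:ℝ) / ((s:ℝ) + i + 1) ≤ Real.log ((s:ℝ) + i + 1) - Real.log ((s:ℝ) + i) := by
        linarith
      calc (1:ℝ) / ((s:ℝ) + 1 + i) = 1 / ((s:ℝ) + i + 1) := by ring_nf
        _ ≤ Real.log ((s:ℝ) + i + 1) - Real.log ((s:ℝ) + i) := this
        _ = Real.log ((s:ℝ) + (i + 1)) - Real.log ((s:ℝ) + i) := by ring_nf
    have h2 : ∑ i ∈ Finset.range (m - 1),
        (Real.log ((s:ℝ) + (i + 1)) - Real.log ((s:ℝ) + i))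
        = Real.log ((s:ℝ) + (m - 1 : ℕ)) - Real.log ((s:ℝ) + (0 : ℕ)) := by
      have := Finset.sum_range_sub (fun i : ℕ => Real.log ((s:ℝ) + i)) (m - 1)
      simpa [Nat.cast_add, Nat.cast_one] using this
    have h3 : Real.log ((s:ℝ) + (m - 1 : ℕ)) ≤ Real.log ((s:ℝ) + m) := by
      apply Real.log_le_log (by positivity)
      have : ((m - 1 : ℕ) : ℝ) ≤ (m:ℝ) := by
        exact_mod_cast Nat.sub_le m 1
      linarith
    calc ∑ n ∈ Finset.Icc (s + 1) (s + m - 1), (1 : ℝ) / n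
        ≤ ∑ i ∈ Finset.range (m - 1),
          (Real.log ((s:ℝ) + (i + 1)) - Real.log ((s:ℝ) + i)) := h1
      _ = Real.log ((s:ℝ) + (m - 1 : ℕ)) - Real.log ((s:ℝ) + (0 : ℕ)) := h2
      _ ≤ Real.log ((s:ℝ) + m) - Real.log s := by
          simp only [Nat.cast_zero, add_zero]
          linarith
  -- Step B: bound the log difference
  have hlog1 : Real.log ((s:ℝ) + m) - Real.log s ≤ Real.log (1 + 1 / c) := by
    have hfrac : ((s:ℝ) + m) / s ≤ 1 + 1 / c := by
      rw [div_le_iff₀ (by positivity)]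
      have hmc : (m:ℝ) ≤ (1 / c) * s := by
        rw [div_mul_eq_mul_div, le_div_iff₀ hc0]
        linarith [hTS]
      have hexp : (1 + 1 / c) * (s:ℝ) = s + (1 / c) * s := by ring
      linarith
    calc Real.log ((s:ℝ) + m) - Real.log s
        = Real.log (((s:ℝ) + m) / s) := by
          rw [Real.log_div (by positivity) (by positivity)]
      _ ≤ Real.log (1 + 1 / c) := Real.log_le_log (by positivity) hfrac
  have hlogpos : 0 ≤ Real.log (1 + 1 / c) := by
    apply Real.log_nonneg
    have : 0 < 1 / c := by positivity
    linarith
  have hlogle1 : Real.log (1 + 1 / c) ≤ 1 := by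
    have h := Real.log_le_sub_one_of_pos (show (0:ℝ) < 1 + 1 / c by positivity)
    have : 1 / c ≤ 1 := by
      rw [div_le_one hc0]; exact hc1
    linarith
  -- combine
  have hsumpos : 0 ≤ ∑ n ∈ Finset.Icc (s + 1) (s + m - 1), (1 : ℝ) / n := by
    apply Finset.sum_nonneg
    intro n _
    positivity
  have key : (s:ℝ) * ∑ n ∈ Finset.Icc (s + 1) (s + m - 1), (1 : ℝ) / n ≤
      c * m * Real.log (1 + 1 / c) + 1 := by
    calc (s:ℝ) * ∑ n ∈ Finset.Icc (s + 1) (s + m - 1), (1 : ℝ) / n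
        ≤ (s:ℝ) * Real.log (1 + 1 / c) := by
          apply mul_le_mul_of_nonneg_left _ (by linarith)
          linarith
      _ ≤ (c * m + 1) * Real.log (1 + 1 / c) := by
          apply mul_le_mul_of_nonneg_right hST hlogpos
      _ = c * m * Real.log (1 + 1 / c) + Real.log (1 + 1 / c) := by ring
      _ ≤ c * m * Real.log (1 + 1 / c) + 1 := by linarith
  nlinarith [key]
end
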